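/- Let y ∈ V^n be a probability vector with positive components and let k > 1 be an integer. If M_{k+1}(y) = S(y), then M_k(y) = S(y). Consequently, if M_k(y) = S(y) for some k ≥ 1, then M_l(y) = S(y) for every l ≤ k. -/

import Mathlib

noncomputable section

/-- `eSum x l` : the sum of the `l` largest components of `x`. -/
def eSum {n : ℕ} (x : Fin n → ℝ) (l : ℕ) : ℝ :=
  sSup {r | ∃ s : Finset (Fin n), s.card = l ∧ r = ∑ i ∈ s, x i}

/-- `ESum x l` : the sum of the `l` smallest components of `x`. -/
def ESum {n : ℕ} (x : Fin n → ℝ) (l : ℕ) : ℝ :=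
  sInf {r | ∃ s : Finset (Fin n), s.card = l ∧ r = ∑ i ∈ s, x i}

/-- Majorization `x ≺ y` (for vectors with equal total sum):
`e_l(x) ≤ e_l(y)` for all `1 ≤ l ≤ n`. -/
def Maj {n : ℕ} (x y : Fin n → ℝ) : Prop :=
  (∑ i, x i) = (∑ i, y i) ∧ ∀ l : ℕ, 1 ≤ l → l ≤ n → eSum x l ≤ eSum y l

/-- Strict majorization `x ◁ y`: equal total sums and `e_l(x) < e_l(y)` for all
`1 ≤ l ≤ n - 1`. -/
def SMaj {n : ℕ} (x y : Fin n → ℝ) : Prop :=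
  (∑ i, x i) = (∑ i, y i) ∧ ∀ l : ℕ, 1 ≤ l → l + 1 ≤ n → eSum x l < eSum y l

/-- Super-majorization `x ≺ʷ y` : `E_l(x) ≥ E_l(y)` for all `1 ≤ l ≤ n`. -/
def SupMaj {n : ℕ} (x y : Fin n → ℝ) : Prop :=
  ∀ l : ℕ, 1 ≤ l → l ≤ n → ESum y l ≤ ESum x l

/-- Strict super-majorization `x ◁ʷ y` : `E_l(x) > E_l(y)` for all `1 ≤ l ≤ n`. -/
def SSupMaj {n : ℕ} (x y : Fin n → ℝ) : Prop :=
  ∀ l : ℕ, 1 ≤ l → l ≤ n → ESum y l < ESum x l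

/-- Tensor product of two vectors: the vector of all pairwise products. -/
def tensor {m k : ℕ} (x : Fin m → ℝ) (c : Fin k → ℝ) : Fin (m * k) → ℝ :=
  fun i => x (finProdFinEquiv.symm i).1 * c (finProdFinEquiv.symm i).2

/-- `k`-fold tensor power of a vector. -/
def tpow {n : ℕ} (x : Fin n → ℝ) (k : ℕ) : Fin (n ^ k) → ℝ :=
  fun i => ∏ j : Fin k, x (finFunctionFinEquiv.symm i j)

/-- `V^n` : probability vectors with components in non-increasing order. -/
def Vn (n : ℕ) : Set (Fin n → ℝ) :=
  {x | (∀ i, 0 ≤ x i) ∧ (∑ i, x i) = 1 ∧ Antitone x}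

/-- `S(y)` : members of `V^n` majorized by `y`. -/
def Sset {n : ℕ} (y : Fin n → ℝ) : Set (Fin n → ℝ) :=
  {x ∈ Vn n | Maj x y}

/-- `T(y,c)` : members of `V^n` with `x ⊗ c ≺ y ⊗ c`. -/
def Tcat {n k : ℕ} (y : Fin n → ℝ) (c : Fin k → ℝ) : Set (Fin n → ℝ) :=
  {x ∈ Vn n | Maj (tensor x c) (tensor y c)}

/-- Local uniformity `l_u(c)` : the minimum of the consecutive ratios `c_{i+1}/c_i`. -/
def lu {k : ℕ} (c : Fin k → ℝ) : ℝ :=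
  sInf {r | ∃ i : ℕ, ∃ h : i + 1 < k, r = c ⟨i + 1, h⟩ / c ⟨i, Nat.lt_of_succ_lt h⟩}

/-- Global uniformity `g_u(c) = c_k / c_1` (smallest over largest component of a
non-increasingly ordered vector). -/
def gu {k : ℕ} (c : Fin k → ℝ) : ℝ :=
  if h : 0 < k then c ⟨k - 1, Nat.sub_lt h Nat.one_pos⟩ / c ⟨0, h⟩ else 1

/-- Largest component. -/
def maxc {n : ℕ} (x : Fin n → ℝ) : ℝ := sSup (Set.range x)

/-- Smallest component. -/
def minc {n : ℕ} (x : Fin n → ℝ) : ℝ := sInf (Set.range x)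

/-- `c'` is a (contiguous) segment of `c`. -/
def IsSegment {j k : ℕ} (c' : Fin j → ℝ) (c : Fin k → ℝ) : Prop :=
  ∃ (i : ℕ) (_h : i + j ≤ k), ∀ t : Fin j, c' t = c ⟨i + t, by have := t.isLt; omega⟩

/-- The first `d` components of a vector. -/
def take {n : ℕ} (x : Fin n → ℝ) (d : ℕ) (h : d ≤ n) : Fin d → ℝ :=
  fun i => x ⟨i, Nat.lt_of_lt_of_le i.isLt h⟩

/-- The components of a vector after the first `d` ones. -/
def drop {n : ℕ} (x : Fin n → ℝ) (d : ℕ) : Fin (n - d) → ℝ :=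
  fun i => x ⟨d + i, by have := i.isLt; omega⟩

/-- The segment `(c_i, …, c_j)` of `c` (`0`-based indices). -/
def seg {k : ℕ} (c : Fin k → ℝ) (i j : ℕ) (hij : i ≤ j) (hj : j < k) :
    Fin (j - i + 1) → ℝ :=
  fun t => c ⟨i + t, by have := t.isLt; omega⟩

/-- `(c_i, …, c_j)` is a block of the decomposition `[c]_α` of the (positive,
non-increasingly ordered) vector `c` according to `α`: ratios within the block
exceed `α`, and the ratios at the two boundaries of the block are `≤ α`
(or the block touches an end of `c`). -/
def IsBlock {k : ℕ} (α : ℝ) (c : Fin k → ℝ) (i j : ℕ) : Prop :=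
  ∃ (hij : i ≤ j) (hj : j < k),
    (i = 0 ∨ c ⟨i, by omega⟩ / c ⟨i - 1, by omega⟩ ≤ α) ∧
    (j = k - 1 ∨ ∃ hj1 : j + 1 < k, c ⟨j + 1, hj1⟩ / c ⟨j, hj⟩ ≤ α) ∧
    (∀ (t : ℕ) (ht1 : i ≤ t) (ht2 : t < j), α < c ⟨t + 1, by omega⟩ / c ⟨t, by omega⟩)

/-- `T_k(y)` : states transformable to `y` with a `k`-dimensional catalyst. -/
def Tk {n : ℕ} (k : ℕ) (y : Fin n → ℝ) : Set (Fin n → ℝ) :=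
  {x ∈ Vn n | ∃ c : Fin k → ℝ, (∀ i, 0 < c i) ∧ (∑ i, c i) = 1 ∧ Antitone c ∧
    Maj (tensor x c) (tensor y c)}

/-- `M_k(y)` : states `x` with `x^{⊗k} ≺ y^{⊗k}`. -/
def Mk {n : ℕ} (k : ℕ) (y : Fin n → ℝ) : Set (Fin n → ℝ) :=
  {x ∈ Vn n | Maj (tpow x k) (tpow y k)}

/-- `T(y)` : states transformable to `y` with some catalyst. -/
def Tinf {n : ℕ} (y : Fin n → ℝ) : Set (Fin n → ℝ) :=
  {x ∈ Vn n | ∃ (k : ℕ) (c : Fin k → ℝ), 0 < k ∧ (∀ i, 0 < c i) ∧ (∑ i, c i) = 1 ∧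
    Antitone c ∧ Maj (tensor x c) (tensor y c)}

/-- `M(y)` : states `x` with `x^{⊗k} ≺ y^{⊗k}` for some `k ≥ 1`. -/
def Minf {n : ℕ} (y : Fin n → ℝ) : Set (Fin n → ℝ) :=
  {x ∈ Vn n | ∃ k : ℕ, 1 ≤ k ∧ Maj (tpow x k) (tpow y k)}

/-- `S^λ(y)` : states `x` with `x ≺ʷ λ y`. -/
def Slam {n : ℕ} (lam : ℝ) (y : Fin n → ℝ) : Set (Fin n → ℝ) :=
  {x ∈ Vn n | SupMaj x (fun i => lam * y i)}

/-- `T^λ(y,c)` : states `x` with `x ⊗ c ≺ʷ λ (y ⊗ c)`. -/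
def Tlamc {n k : ℕ} (lam : ℝ) (y : Fin n → ℝ) (c : Fin k → ℝ) : Set (Fin n → ℝ) :=
  {x ∈ Vn n | SupMaj (tensor x c) (fun i => lam * tensor y c i)}

/-- `T_k^λ(y)`. -/
def Tklam {n : ℕ} (k : ℕ) (lam : ℝ) (y : Fin n → ℝ) : Set (Fin n → ℝ) :=
  {x ∈ Vn n | ∃ c : Fin k → ℝ, (∀ i, 0 < c i) ∧ (∑ i, c i) = 1 ∧ Antitone c ∧
    SupMaj (tensor x c) (fun i => lam * tensor y c i)}

/-- `M_k^λ(y)`. -/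
def Mklam {n : ℕ} (k : ℕ) (lam : ℝ) (y : Fin n → ℝ) : Set (Fin n → ℝ) :=
  {x ∈ Vn n | SupMaj (tpow x k) (fun i => lam ^ k * tpow y k i)}

/-- `T^λ(y)`. -/
def Tlaminf {n : ℕ} (lam : ℝ) (y : Fin n → ℝ) : Set (Fin n → ℝ) :=
  {x ∈ Vn n | ∃ (k : ℕ) (c : Fin k → ℝ), 0 < k ∧ (∀ i, 0 < c i) ∧ (∑ i, c i) = 1 ∧
    Antitone c ∧ SupMaj (tensor x c) (fun i => lam * tensor y c i)}

/-- `M^λ(y)`. -/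
def Mlaminf {n : ℕ} (lam : ℝ) (y : Fin n → ℝ) : Set (Fin n → ℝ) :=
  {x ∈ Vn n | ∃ k : ℕ, 1 ≤ k ∧ SupMaj (tpow x k) (fun i => lam ^ k * tpow y k i)}

/-- `K_d(y)` : concatenations `x = x' ⊕ x''` with `x' ◁ y'` and `x'' ◁ y''`,
where `y'` is the first-`d` part of `y` and `y''` the rest. -/
def Kd {n : ℕ} (y : Fin n → ℝ) (d : ℕ) (h : d ≤ n) : Set (Fin n → ℝ) :=
  {x ∈ Vn n | SMaj (take x d h) (take y d h) ∧ SMaj (drop x d) (drop y d)}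

/-- `y(d)` : first `d` components equal to `e_d(y)/d`, the last `n-d` equal to
`(1 - e_d(y))/(n-d)`. -/
def yvec {n : ℕ} (y : Fin n → ℝ) (d : ℕ) : Fin n → ℝ :=
  fun i => if (i : ℕ) < d then eSum y d / d else (1 - eSum y d) / (n - d)

/-- `K_d^λ(y)` : states `x ∈ S^λ(y)` with `E_l(x) = λ E_l(y)` iff `l = n - d`. -/
def Kdlam {n : ℕ} (lam : ℝ) (y : Fin n → ℝ) (d : ℕ) : Set (Fin n → ℝ) :=
  {x ∈ Vn n | SupMaj x (fun i => lam * y i) ∧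
    ∀ l : ℕ, 1 ≤ l → l ≤ n → (ESum x l = lam * ESum y l ↔ l = n - d)}
-- Stage 1: Phi and eSum API (to be appended after preamble)
open Finset in
private def Phi {ι : Type*} [Fintype ι] (u : ι → ℝ) (t : ℝ) : ℝ := ∑ i, max (u i - t) 0

private lemma Phi_nonneg {ι : Type*} [Fintype ι] (u : ι → ℝ) (t : ℝ) : 0 ≤ Phi u t :=
  Finset.sum_nonneg fun i _ => le_max_right _ _

private lemma Phi_zero {ι : Type*} [Fintype ι] (u : ι → ℝ) (hu : ∀ i, 0 ≤ u i) :
    Phi u 0 = ∑ i, u i := by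
  unfold Phi
  refine Finset.sum_congr rfl fun i _ => ?_
  simp [max_eq_left, hu i]

private lemma Phi_comp_equiv {ι κ : Type*} [Fintype ι] [Fintype κ] (e : ι ≃ κ) (u : κ → ℝ)
    (t : ℝ) : Phi (u ∘ e) t = Phi u t := by
  unfold Phi
  exact Equiv.sum_comp e (fun j => max (u j - t) 0)

/-- prefix set: the first `l` elements of `Fin M`. -/
private def pref {M : ℕ} (l : ℕ) (h : l ≤ M) : Finset (Fin M) :=
  Finset.univ.map (Fin.castLEEmb h)

private lemma mem_pref {M l : ℕ} (h : l ≤ M) (i : Fin M) : i ∈ pref l h ↔ (i : ℕ) < l := by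
  simp only [pref, Finset.mem_map, Finset.mem_univ, true_and]
  constructor
  · rintro ⟨j, rfl⟩; exact j.isLt
  · intro hi; exact ⟨⟨i, hi⟩, rfl⟩

private lemma card_pref {M l : ℕ} (h : l ≤ M) : (pref l h).card = l := by
  simp [pref]

private lemma eSum_bddAbove {M : ℕ} (u : Fin M → ℝ) (hu : ∀ i, 0 ≤ u i) (l : ℕ) :
    BddAbove {r | ∃ s : Finset (Fin M), s.card = l ∧ r = ∑ i ∈ s, u i} := by
  refine ⟨∑ i, u i, ?_⟩
  rintro r ⟨s, hs, rfl⟩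
  exact Finset.sum_le_sum_of_subset_of_nonneg (Finset.subset_univ s) (fun i _ _ => hu i)

private lemma le_eSum {M : ℕ} (u : Fin M → ℝ) (hu : ∀ i, 0 ≤ u i) (s : Finset (Fin M)) :
    ∑ i ∈ s, u i ≤ eSum u s.card :=
  le_csSup (eSum_bddAbove u hu _) ⟨s, rfl, rfl⟩

private lemma eSum_le {M : ℕ} (u : Fin M → ℝ) {l : ℕ} (hl : l ≤ M) {B : ℝ}
    (h : ∀ s : Finset (Fin M), s.card = l → ∑ i ∈ s, u i ≤ B) : eSum u l ≤ B := by
  obtain ⟨s, -, hs⟩ := Finset.exists_subset_card_eq (le_trans hl (by simp) :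
    l ≤ (Finset.univ : Finset (Fin M)).card)
  refine csSup_le ⟨∑ i ∈ s, u i, s, hs, rfl⟩ ?_
  rintro r ⟨s', hs', rfl⟩
  exact h s' hs'

private lemma eSum_zero {M : ℕ} (u : Fin M → ℝ) : eSum u 0 = 0 := by
  have : {r | ∃ s : Finset (Fin M), s.card = 0 ∧ r = ∑ i ∈ s, u i} = {0} := by
    ext r
    simp only [Set.mem_setOf_eq, Set.mem_singleton_iff, Finset.card_eq_zero]
    constructor
    · rintro ⟨s, rfl, rfl⟩; simp
    · rintro rfl; exact ⟨∅, rfl, by simp⟩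
  rw [eSum, this, csSup_singleton]

private lemma eSum_dual {M : ℕ} (u : Fin M → ℝ) {l : ℕ} (hl : l ≤ M) {t : ℝ} (ht : 0 ≤ t) :
    eSum u l ≤ l * t + Phi u t := by
  refine eSum_le u hl fun s hs => ?_
  have h1 : ∀ i ∈ s, u i ≤ max (u i - t) 0 + t := by
    intro i _
    rcases le_total (u i) t with h | h
    · have : (0:ℝ) ≤ max (u i - t) 0 := le_max_right _ _
      linarith
    · have : max (u i - t) 0 = u i - t := max_eq_left (by linarith)
      linarith
  calc ∑ i ∈ s, u i ≤ ∑ i ∈ s, (max (u i - t) 0 + t) := Finset.sum_le_sum h1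
    _ = ∑ i ∈ s, max (u i - t) 0 + l * t := by rw [Finset.sum_add_distrib]; simp [hs, mul_comm]
    _ ≤ Phi u t + l * t := by
        gcongr
        exact Finset.sum_le_sum_of_subset_of_nonneg (Finset.subset_univ s)
          (fun i _ _ => le_max_right _ _)
    _ = l * t + Phi u t := add_comm _ _

private lemma eSum_le_total {M : ℕ} (u : Fin M → ℝ) (hu : ∀ i, 0 ≤ u i) {l : ℕ} (hl : l ≤ M) :
    eSum u l ≤ ∑ i, u i := by
  have := eSum_dual u hl (le_refl (0:ℝ))
  rwa [Phi_zero u hu, mul_zero, zero_add] at this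

private lemma eSum_full {M : ℕ} (u : Fin M → ℝ) (hu : ∀ i, 0 ≤ u i) :
    eSum u M = ∑ i, u i := by
  refine le_antisymm (eSum_le_total u hu le_rfl) ?_
  have := le_eSum u hu Finset.univ
  simpa using this

private lemma eSum_nonneg {M : ℕ} (u : Fin M → ℝ) (hu : ∀ i, 0 ≤ u i) {l : ℕ} (hl : l ≤ M) :
    0 ≤ eSum u l := by
  obtain ⟨s, -, hs⟩ := Finset.exists_subset_card_eq (le_trans hl (by simp) :
    l ≤ (Finset.univ : Finset (Fin M)).card)
  have := le_eSum u hu s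
  rw [hs] at this
  exact le_trans (Finset.sum_nonneg fun i _ => hu i) this
-- Stage 2: sorted enumeration, prefix formula, AVG, Maj<->Phi
private lemma exists_antitone_perm {M : ℕ} (u : Fin M → ℝ) :
    ∃ σ : Equiv.Perm (Fin M), Antitone (u ∘ σ) := by
  refine ⟨Tuple.sort (fun i => -u i), ?_⟩
  have h := Tuple.monotone_sort (fun i => -u i)
  intro i j hij
  have := h hij
  simp only [Function.comp_apply] at this ⊢
  linarith

/-- prefix formula for antitone nonneg vectors -/
private lemma eSum_prefix {M : ℕ} (u : Fin M → ℝ) (hu : ∀ i, 0 ≤ u i) (hmono : Antitone u)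
    {l : ℕ} (hl : l ≤ M) : eSum u l = ∑ i ∈ pref l hl, u i := by
  rcases Nat.eq_zero_or_pos l with rfl | hl0
  · rw [eSum_zero]
    have : pref 0 hl = ∅ := by
      ext i; simp [mem_pref]
    simp [this]
  · have hlM : l - 1 < M := by omega
    set t : ℝ := u ⟨l - 1, hlM⟩ with hts
    have ht0 : 0 ≤ t := hu _
    refine le_antisymm ?_ ?_
    · -- via dual at t
      have hdual := eSum_dual u hl ht0
      have hPhi : Phi u t = ∑ i ∈ pref l hl, (u i - t) := by
        unfold Phi
        rw [← Finset.sum_subset (Finset.subset_univ (pref l hl))]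
        · refine Finset.sum_congr rfl fun i hi => ?_
          rw [mem_pref] at hi
          have : t ≤ u i := hmono (by simp [Fin.le_def]; omega)
          simp [max_eq_left, sub_nonneg.2 this]
        · intro i _ hi
          rw [mem_pref] at hi
          have : u i ≤ t := hmono (by simp [Fin.le_def]; omega)
          simp [max_eq_right, sub_nonpos.2 this]
      rw [hPhi, Finset.sum_sub_distrib] at hdual
      have hcard : ((pref l hl).card : ℝ) = l := by rw [card_pref]
      calc eSum u l ≤ l * t + (∑ i ∈ pref l hl, u i - ∑ _i ∈ pref l hl, t) := hdual
        _ = ∑ i ∈ pref l hl, u i := by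
            rw [Finset.sum_const, card_pref, nsmul_eq_mul]
            ring
    · have := le_eSum u hu (pref l hl)
      rwa [card_pref] at this

/-- interval sets in `Fin M` -/
private def ico {M : ℕ} (p q : ℕ) (h : q ≤ M) : Finset (Fin M) :=
  (pref q h).filter fun i => p ≤ (i : ℕ)

private lemma mem_ico {M p q : ℕ} (h : q ≤ M) (i : Fin M) :
    i ∈ ico p q h ↔ p ≤ (i : ℕ) ∧ (i : ℕ) < q := by
  simp [ico, mem_pref, and_comm]

private lemma card_ico {M p q : ℕ} (hpq : p ≤ q) (h : q ≤ M) : (ico p q h).card = q - p := by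
  classical
  have : ico p q h = (pref q h) \ (pref p (le_trans hpq h)) := by
    ext i; simp [mem_ico, mem_pref, not_lt]
    tauto
  rw [this, Finset.card_sdiff_of_subset, card_pref, card_pref]
  intro i hi
  rw [mem_pref] at hi ⊢
  omega

private lemma pref_sum_split {M : ℕ} (u : Fin M → ℝ) {p q : ℕ} (hpq : p ≤ q) (h : q ≤ M) :
    ∑ i ∈ pref q h, u i = ∑ i ∈ pref p (le_trans hpq h), u i + ∑ i ∈ ico p q h, u i := by
  classical
  rw [← Finset.sum_union]
  · congr 1
    ext i
    simp only [Finset.mem_union, mem_pref, mem_ico]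
    omega
  · rw [Finset.disjoint_left]
    intro i hi1 hi2
    rw [mem_pref] at hi1
    rw [mem_ico] at hi2
    omega

/-- AVG: for antitone u, the average over an initial part of a window dominates. -/
private lemma avg_lemma {M : ℕ} (u : Fin M → ℝ) (hmono : Antitone u) {p l q : ℕ}
    (hpl : p ≤ l) (hlq : l ≤ q) (hq : q ≤ M) :
    ((q : ℝ) - p) * ∑ i ∈ ico p l (le_trans hlq hq), u i ≥
      ((l : ℝ) - p) * ∑ i ∈ ico p q hq, u i := by
  rcases Nat.eq_zero_or_pos l with rfl | hl0
  · have hp0 : p = 0 := by omega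
    subst hp0
    have h1 : ico 0 0 (le_trans hlq hq) = ∅ := by ext i; simp [mem_ico]
    simp [h1]
  · -- l ≥ 1
    have hlM : l - 1 < M := by omega
    set c : ℝ := u ⟨l - 1, hlM⟩ with hc
    have h1 : ∑ i ∈ ico p l (le_trans hlq hq), u i ≥ ((l : ℝ) - p) * c := by
      calc ∑ i ∈ ico p l (le_trans hlq hq), u i ≥ ∑ _i ∈ ico p l (le_trans hlq hq), c :=
            Finset.sum_le_sum (fun i hi => by
              rw [mem_ico] at hi
              exact hmono (by simp [Fin.le_def]; omega))
        _ = ((l : ℝ) - p) * c := by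
            rw [Finset.sum_const, card_ico hpl, nsmul_eq_mul]
            have : ((l - p : ℕ) : ℝ) = (l : ℝ) - p := by
              have := Nat.cast_sub hpl (R := ℝ); linarith
            rw [this]
    have h2 : ∑ i ∈ ico l q hq, u i ≤ ((q : ℝ) - l) * c := by
      calc ∑ i ∈ ico l q hq, u i ≤ ∑ _i ∈ ico l q hq, c :=
            Finset.sum_le_sum (fun i hi => by
              rw [mem_ico] at hi
              exact hmono (by simp [Fin.le_def]; omega))
        _ = ((q : ℝ) - l) * c := by
            rw [Finset.sum_const, card_ico hlq, nsmul_eq_mul]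
            have : ((q - l : ℕ) : ℝ) = (q : ℝ) - l := by
              have := Nat.cast_sub hlq (R := ℝ); linarith
            rw [this]
    have hsplit : ∑ i ∈ ico p q hq, u i =
        ∑ i ∈ ico p l (le_trans hlq hq), u i + ∑ i ∈ ico l q hq, u i := by
      classical
      rw [← Finset.sum_union]
      · congr 1
        ext i
        simp only [Finset.mem_union, mem_ico]
        omega
      · rw [Finset.disjoint_left]
        intro i hi1 hi2
        rw [mem_ico] at hi1
        rw [mem_ico] at hi2
        omega
    have hcast1 : (p : ℝ) ≤ l := by exact_mod_cast hpl
    have hcast2 : (l : ℝ) ≤ q := by exact_mod_cast hlq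
    set A := ∑ i ∈ ico p l (le_trans hlq hq), u i
    set B := ∑ i ∈ ico l q hq, u i
    rw [hsplit]
    nlinarith [h1, h2]

/-- comparison of eSum via Phi comparison -/
private lemma eSum_le_of_phi {M : ℕ} (u w : Fin M → ℝ) (hu : ∀ i, 0 ≤ u i)
    (hw : ∀ i, 0 ≤ w i) (hphi : ∀ t, 0 ≤ t → Phi u t ≤ Phi w t) {l : ℕ} (hl : l ≤ M) :
    eSum u l ≤ eSum w l := by
  rcases Nat.eq_zero_or_pos l with rfl | hl0
  · rw [eSum_zero, eSum_zero]
  obtain ⟨σ, hσ⟩ := exists_antitone_perm w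
  set g := w ∘ σ with hg
  have hgnn : ∀ i, 0 ≤ g i := fun i => hw _
  have hlM : l - 1 < M := by omega
  set t : ℝ := g ⟨l - 1, hlM⟩ with ht
  have ht0 : 0 ≤ t := hgnn _
  have heg : eSum w l = eSum g l := by
    unfold eSum
    congr 1
    ext r
    constructor
    · rintro ⟨s, hs, rfl⟩
      refine ⟨s.image σ.symm, by rw [Finset.card_image_of_injective _ σ.symm.injective, hs], ?_⟩
      rw [Finset.sum_image (fun a _ b _ h => σ.symm.injective h)]
      simp [hg]
    · rintro ⟨s, hs, rfl⟩
      refine ⟨s.image σ, by rw [Finset.card_image_of_injective _ σ.injective, hs], ?_⟩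
      rw [Finset.sum_image (fun a _ b _ h => σ.injective h)]
      simp [hg]
  have hPhig : Phi w t = Phi g t := (Phi_comp_equiv σ w t).symm
  have h1 : eSum u l ≤ l * t + Phi u t := eSum_dual u hl ht0
  have h2 : Phi g t = ∑ i ∈ pref l hl, g i - l * t := by
    unfold Phi
    rw [← Finset.sum_subset (Finset.subset_univ (pref l hl))]
    · have : ∀ i ∈ pref l hl, max (g i - t) 0 = g i - t := by
        intro i hi
        rw [mem_pref] at hi
        have : t ≤ g i := hσ (by simp [Fin.le_def]; omega)
        simp [max_eq_left, sub_nonneg.2 this]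
      rw [Finset.sum_congr rfl this, Finset.sum_sub_distrib, Finset.sum_const, card_pref,
        nsmul_eq_mul]
    · intro i _ hi
      rw [mem_pref] at hi
      have : g i ≤ t := hσ (by simp [Fin.le_def]; omega)
      simp [max_eq_right, sub_nonpos.2 this]
  have h3 : eSum g l = ∑ i ∈ pref l hl, g i := eSum_prefix g hgnn hσ hl
  rw [heg, h3]
  calc eSum u l ≤ l * t + Phi u t := h1
    _ ≤ l * t + Phi w t := by linarith [hphi t ht0]
    _ = l * t + (∑ i ∈ pref l hl, g i - l * t) := by rw [hPhig, h2]
    _ = ∑ i ∈ pref l hl, g i := by ring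

/-- Phi comparison from eSum comparison -/
private lemma phi_le_of_eSum {M : ℕ} (u w : Fin M → ℝ) (hu : ∀ i, 0 ≤ u i)
    (he : ∀ l, 1 ≤ l → l ≤ M → eSum u l ≤ eSum w l) {t : ℝ} (ht : 0 ≤ t) :
    Phi u t ≤ Phi w t := by
  classical
  set s := Finset.univ.filter (fun i => t < u i) with hs
  have hPhiu : Phi u t = ∑ i ∈ s, (u i - t) := by
    unfold Phi
    rw [← Finset.sum_subset (Finset.filter_subset (fun i => t < u i) Finset.univ)]
    · refine Finset.sum_congr rfl fun i hi => ?_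
      rw [hs, Finset.mem_filter] at hi
      simp [max_eq_left, sub_nonneg.2 (le_of_lt hi.2)]
    · intro i _ hi
      rw [Finset.mem_filter] at hi
      simp only [Finset.mem_univ, true_and] at hi
      push_neg at hi
      simp [max_eq_right, sub_nonpos.2 hi]
  rcases Nat.eq_zero_or_pos s.card with hc | hc
  · rw [hPhiu, Finset.card_eq_zero.mp hc]
    simp [Phi_nonneg]
  · have hcard : s.card ≤ M := by
      calc s.card ≤ (Finset.univ : Finset (Fin M)).card := Finset.card_le_card (by simp [hs])
        _ = M := by simp
    have h1 : ∑ i ∈ s, u i ≤ eSum u s.card := le_eSum u hu s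
    have h2 : eSum u s.card ≤ eSum w s.card := he s.card hc hcard
    have h3 : eSum w s.card ≤ s.card * t + Phi w t := eSum_dual w hcard ht
    rw [hPhiu, Finset.sum_sub_distrib, Finset.sum_const, nsmul_eq_mul]
    linarith
-- Stage 3: tpow machinery
private def Em (n k : ℕ) : Fin (n ^ (k + 1)) ≃ Fin n × Fin (n ^ k) :=
  finFunctionFinEquiv.symm.trans
    (((Fin.consEquiv (fun _ : Fin (k+1) => Fin n)).symm).trans
      ((Equiv.refl (Fin n)).prodCongr finFunctionFinEquiv))

private lemma consEquiv_symm_apply {n k : ℕ} (g : Fin (k+1) → Fin n) :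
    (Fin.consEquiv (fun _ : Fin (k+1) => Fin n)).symm g = (g 0, fun j => g j.succ) := rfl

private lemma tpow_succ_eq {n k : ℕ} (u : Fin n → ℝ) (i : Fin (n ^ (k+1))) :
    tpow u (k + 1) i = u ((Em n k) i).1 * tpow u k ((Em n k) i).2 := by
  set g := finFunctionFinEquiv.symm i with hg
  have h1 : ((Em n k) i).1 = g 0 := rfl
  have h2 : ((Em n k) i).2 = finFunctionFinEquiv (fun j => g j.succ) := rfl
  unfold tpow
  rw [h1, h2, ← hg]
  rw [Fin.prod_univ_succ]
  congr 1
  refine Finset.prod_congr rfl fun j _ => ?_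
  rw [Equiv.symm_apply_apply]

private lemma tpow_symm_eq {n k : ℕ} (u : Fin n → ℝ) (z : Fin n × Fin (n ^ k)) :
    tpow u (k + 1) ((Em n k).symm z) = u z.1 * tpow u k z.2 := by
  rw [tpow_succ_eq, Equiv.apply_symm_apply]

private lemma tpow_zero_eq {n : ℕ} (u : Fin n → ℝ) (i : Fin (n ^ 0)) : tpow u 0 i = 1 := by
  unfold tpow
  simp

private lemma tpow_nonneg {n : ℕ} (u : Fin n → ℝ) (hu : ∀ i, 0 ≤ u i) (m : ℕ) :
    ∀ i, 0 ≤ tpow u m i := fun i => Finset.prod_nonneg fun j _ => hu _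

private lemma sum_tpow {n : ℕ} (u : Fin n → ℝ) (m : ℕ) :
    ∑ i, tpow u m i = (∑ i, u i) ^ m := by
  induction m with
  | zero => rw [Finset.sum_congr rfl fun i _ => tpow_zero_eq u i, Finset.sum_const, Finset.card_univ, Fintype.card_fin, pow_zero]; simp
  | succ m ih =>
    have h := Fintype.sum_equiv (Em n m) (tpow u (m+1))
      (fun z => u z.1 * tpow u m z.2) (fun i => tpow_succ_eq u i)
    rw [h, Fintype.sum_prod_type]
    simp_rw [← Finset.mul_sum]
    rw [← Finset.sum_mul, ih, pow_succ]
    ring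

private lemma phi_scale {ι κ : Type*} [Fintype ι] [Fintype κ] (U : ι → ℝ) (W : κ → ℝ)
    (hphi : ∀ s, 0 ≤ s → Phi U s ≤ Phi W s) {c : ℝ} (hc : 0 ≤ c) {t : ℝ} (ht : 0 ≤ t) :
    ∑ i, max (c * U i - t) 0 ≤ ∑ i, max (c * W i - t) 0 := by
  rcases eq_or_lt_of_le hc with rfl | hc0
  · simp [max_eq_right, neg_nonpos.2 ht, ht]
  · have key1 : ∑ i, max (c * U i - t) 0 = c * Phi U (t / c) := by
      unfold Phi
      rw [Finset.mul_sum]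
      refine Finset.sum_congr rfl fun i _ => ?_
      rw [mul_max_of_nonneg _ _ (le_of_lt hc0), mul_zero, mul_sub, mul_div_cancel₀]
      exact ne_of_gt hc0
    have key2 : ∑ i, max (c * W i - t) 0 = c * Phi W (t / c) := by
      unfold Phi
      rw [Finset.mul_sum]
      refine Finset.sum_congr rfl fun i _ => ?_
      rw [mul_max_of_nonneg _ _ (le_of_lt hc0), mul_zero, mul_sub, mul_div_cancel₀]
      exact ne_of_gt hc0
    rw [key1, key2]
    exact mul_le_mul_of_nonneg_left (hphi (t / c) (div_nonneg ht (le_of_lt hc0))) (le_of_lt hc0)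

private lemma phi_tpow_le {n : ℕ} (u w : Fin n → ℝ) (hu : ∀ i, 0 ≤ u i) (hw : ∀ i, 0 ≤ w i)
    (hphi : ∀ t, 0 ≤ t → Phi u t ≤ Phi w t) (m : ℕ) :
    ∀ t, 0 ≤ t → Phi (tpow u m) t ≤ Phi (tpow w m) t := by
  induction m with
  | zero =>
    intro t ht
    have : tpow u 0 = tpow w 0 := by
      funext i; rw [tpow_zero_eq, tpow_zero_eq]
    rw [this]
  | succ m ih =>
    intro t ht
    have hU := tpow_nonneg u hu m
    have hW := tpow_nonneg w hw m
    have e1 : Phi (tpow u (m+1)) t = ∑ p : Fin n, ∑ q : Fin (n^m),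
        max (u p * tpow u m q - t) 0 := by
      unfold Phi
      rw [Fintype.sum_equiv (Em n m) _ (fun z => max (u z.1 * tpow u m z.2 - t) 0)
        (fun i => by rw [tpow_succ_eq])]
      rw [Fintype.sum_prod_type]
    have e2 : Phi (tpow w (m+1)) t = ∑ p : Fin n, ∑ q : Fin (n^m),
        max (w p * tpow w m q - t) 0 := by
      unfold Phi
      rw [Fintype.sum_equiv (Em n m) _ (fun z => max (w z.1 * tpow w m z.2 - t) 0)
        (fun i => by rw [tpow_succ_eq])]
      rw [Fintype.sum_prod_type]
    rw [e1, e2]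
    have step1 : ∑ p : Fin n, ∑ q : Fin (n^m), max (u p * tpow u m q - t) 0 ≤
        ∑ p : Fin n, ∑ q : Fin (n^m), max (u p * tpow w m q - t) 0 := by
      refine Finset.sum_le_sum fun p _ => ?_
      exact phi_scale (tpow u m) (tpow w m) ih (hu p) ht
    have step2 : ∑ p : Fin n, ∑ q : Fin (n^m), max (u p * tpow w m q - t) 0 ≤
        ∑ p : Fin n, ∑ q : Fin (n^m), max (w p * tpow w m q - t) 0 := by
      rw [Finset.sum_comm, Finset.sum_comm (γ := Fin n)]
      refine Finset.sum_le_sum fun q _ => ?_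
      have := phi_scale u w hphi (hW q) ht
      calc ∑ p : Fin n, max (u p * tpow w m q - t) 0
          = ∑ p : Fin n, max (tpow w m q * u p - t) 0 := by
            refine Finset.sum_congr rfl fun p _ => by rw [mul_comm]
        _ ≤ ∑ p : Fin n, max (tpow w m q * w p - t) 0 := this
        _ = ∑ p : Fin n, max (w p * tpow w m q - t) 0 := by
            refine Finset.sum_congr rfl fun p _ => by rw [mul_comm]
    exact le_trans step1 step2

/-- majorization is preserved by tensor powers -/
private lemma maj_tpow {n : ℕ} (u w : Fin n → ℝ) (hu : ∀ i, 0 ≤ u i) (hw : ∀ i, 0 ≤ w i)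
    (hmaj : Maj u w) (m : ℕ) : Maj (tpow u m) (tpow w m) := by
  obtain ⟨hsum, he⟩ := hmaj
  have hphi : ∀ t, 0 ≤ t → Phi u t ≤ Phi w t := fun t ht => phi_le_of_eSum u w hu he ht
  have hphim := phi_tpow_le u w hu hw hphi m
  constructor
  · rw [sum_tpow, sum_tpow, hsum]
  · intro l hl1 hl2
    exact eSum_le_of_phi _ _ (tpow_nonneg u hu m) (tpow_nonneg w hw m) hphim hl2

/-- an optimal set achieving eSum -/
private lemma eSum_achieved {M : ℕ} (u : Fin M → ℝ) {l : ℕ} (hl : l ≤ M) :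
    ∃ s : Finset (Fin M), s.card = l ∧ eSum u l = ∑ i ∈ s, u i := by
  classical
  set F := (Finset.univ.powersetCard l).image (fun s => ∑ i ∈ s, u i) with hF
  have hne : F.Nonempty := by
    obtain ⟨s, -, hs⟩ := Finset.exists_subset_card_eq
      (le_trans hl (by simp) : l ≤ (Finset.univ : Finset (Fin M)).card)
    exact ⟨∑ i ∈ s, u i, Finset.mem_image.2 ⟨s, by simp [Finset.mem_powersetCard, hs], rfl⟩⟩
  have hset : {r | ∃ s : Finset (Fin M), s.card = l ∧ r = ∑ i ∈ s, u i} = ↑F := by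
    ext r
    simp only [Set.mem_setOf_eq, hF, Finset.coe_image, Set.mem_image, Finset.mem_coe,
      Finset.mem_powersetCard]
    constructor
    · rintro ⟨s, hs, rfl⟩; exact ⟨s, ⟨Finset.subset_univ s, hs⟩, rfl⟩
    · rintro ⟨s, ⟨-, hs⟩, rfl⟩; exact ⟨s, hs, rfl⟩
  have : eSum u l = F.max' hne := by
    rw [eSum, hset, Finset.Nonempty.csSup_eq_max']
  obtain ⟨s, hmem, hval⟩ := Finset.mem_image.1 (F.max'_mem hne)
  rw [Finset.mem_powersetCard] at hmem
  exact ⟨s, hmem.2, by rw [this, ← hval]⟩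

/-- SPLIT: building blocks for lower bounds on eSum of tensor powers. -/
private lemma split_lemma {n k : ℕ} (c : Fin n → ℝ) (hc : ∀ i, 0 ≤ c i) {r l1 l2 : ℕ}
    (hr : r ≤ n) (h1 : l1 ≤ n ^ k) (h2 : l2 ≤ n ^ k) :
    (∑ i ∈ pref r hr, c i) * eSum (tpow c k) l1
      + (∑ i ∈ (pref r hr)ᶜ, c i) * eSum (tpow c k) l2
      ≤ eSum (tpow c (k+1)) (r * l1 + (n - r) * l2) := by
  classical
  obtain ⟨B1, hB1c, hB1v⟩ := eSum_achieved (tpow c k) h1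
  obtain ⟨B2, hB2c, hB2v⟩ := eSum_achieved (tpow c k) h2
  set R := pref r hr with hR
  set Z := (R ×ˢ B1) ∪ (Rᶜ ×ˢ B2) with hZ
  have hdisj : Disjoint (R ×ˢ B1) (Rᶜ ×ˢ B2) := by
    rw [Finset.disjoint_left]
    rintro ⟨p, q⟩ hp hq
    rw [Finset.mem_product] at hp hq
    exact (Finset.mem_compl.1 hq.1) hp.1
  set A := Z.image (Em n k).symm with hA
  have hcard : A.card = r * l1 + (n - r) * l2 := by
    rw [hA, Finset.card_image_of_injective _ (Em n k).symm.injective, hZ,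
      Finset.card_union_of_disjoint hdisj, Finset.card_product, Finset.card_product,
      Finset.card_compl, card_pref, hB1c, hB2c]
    simp [card_pref]
  have hsum : ∑ i ∈ A, tpow c (k+1) i =
      (∑ i ∈ R, c i) * eSum (tpow c k) l1 + (∑ i ∈ Rᶜ, c i) * eSum (tpow c k) l2 := by
    rw [hA, Finset.sum_image (fun a _ b _ h => (Em n k).symm.injective h)]
    have : ∀ z ∈ Z, tpow c (k+1) ((Em n k).symm z) = c z.1 * tpow c k z.2 :=
      fun z _ => tpow_symm_eq c z
    rw [Finset.sum_congr rfl this, hZ, Finset.sum_union hdisj,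
      Finset.sum_product, Finset.sum_product]
    rw [hB1v, hB2v]
    rw [← Finset.sum_mul_sum, ← Finset.sum_mul_sum]
  calc (∑ i ∈ R, c i) * eSum (tpow c k) l1 + (∑ i ∈ Rᶜ, c i) * eSum (tpow c k) l2
      = ∑ i ∈ A, tpow c (k+1) i := hsum.symm
    _ ≤ eSum (tpow c (k+1)) A.card := le_eSum _ (tpow_nonneg c hc (k+1)) A
    _ = eSum (tpow c (k+1)) (r * l1 + (n - r) * l2) := by rw [hcard]
-- Stage 4: binomial tails
private def Tb (k j : ℕ) (a b : ℝ) : ℝ :=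
  ∑ i ∈ Finset.Icc j k, (k.choose i : ℝ) * a ^ i * b ^ (k - i)

private def Nb (k j r s : ℕ) : ℕ :=
  ∑ i ∈ Finset.Icc j k, k.choose i * r ^ i * s ^ (k - i)

private lemma Tb_zero (k : ℕ) (a b : ℝ) : Tb k 0 a b = (a + b) ^ k := by
  rw [add_pow, Tb]
  have : Finset.Icc 0 k = Finset.range (k + 1) := by
    ext i; simp [Nat.lt_succ_iff]
  rw [this]
  refine Finset.sum_congr rfl fun i _ => by ring

private lemma Tb_empty {k j : ℕ} (h : k < j) (a b : ℝ) : Tb k j a b = 0 := by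
  rw [Tb, Finset.Icc_eq_empty (by omega), Finset.sum_empty]

private lemma Tb_nonneg (k j : ℕ) {a b : ℝ} (ha : 0 ≤ a) (hb : 0 ≤ b) : 0 ≤ Tb k j a b :=
  Finset.sum_nonneg fun i _ => by positivity

private lemma Tb_anti (k : ℕ) {j j' : ℕ} (h : j ≤ j') {a b : ℝ} (ha : 0 ≤ a) (hb : 0 ≤ b) :
    Tb k j' a b ≤ Tb k j a b := by
  refine Finset.sum_le_sum_of_subset_of_nonneg ?_ fun i _ _ => by positivity
  intro i hi
  rw [Finset.mem_Icc] at hi ⊢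
  omega

private lemma Tb_pascal {k j : ℕ} (hj : 1 ≤ j) (a b : ℝ) :
    Tb (k + 1) j a b = a * Tb k (j - 1) a b + b * Tb k j a b := by
  rcases le_or_gt j (k + 1) with hjk | hjk
  · have hmap : Finset.Icc j (k + 1) =
        (Finset.Icc (j - 1) k).map ⟨fun i => i + 1, add_left_injective 1⟩ := by
      ext i
      simp only [Finset.mem_Icc, Finset.mem_map, Function.Embedding.coeFn_mk]
      constructor
      · intro ⟨h1, h2⟩; exact ⟨i - 1, ⟨by omega, by omega⟩, by omega⟩
      · rintro ⟨i', ⟨h1, h2⟩, rfl⟩; omega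
    have hch : ∀ i : ℕ, ((k + 1).choose (i + 1) : ℝ) = (k.choose i : ℝ) + (k.choose (i + 1) : ℝ) := by
      intro i
      rw [← Nat.cast_add, Nat.choose_succ_succ]
    have hsplit : ∀ i ∈ Finset.Icc (j - 1) k,
        ((k + 1).choose (i + 1) : ℝ) * a ^ (i + 1) * b ^ (k + 1 - (i + 1)) =
          a * ((k.choose i : ℝ) * a ^ i * b ^ (k - i)) +
          (k.choose (i + 1) : ℝ) * a ^ (i + 1) * b ^ (k - i) := by
      intro i hi
      rw [hch i]
      have : k + 1 - (i + 1) = k - i := by omega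
      rw [this]
      ring
    have hsecond : ∑ i ∈ Finset.Icc (j - 1) k, (k.choose (i + 1) : ℝ) * a ^ (i + 1) * b ^ (k - i)
        = b * Tb k j a b := by
      rcases le_or_gt j k with hjk2 | hjk2
      · have hk1 : 1 ≤ k := le_trans hj hjk2
        have hins : Finset.Icc (j - 1) k = insert k (Finset.Icc (j - 1) (k - 1)) := by
          ext i
          simp only [Finset.mem_Icc, Finset.mem_insert]
          omega
        have hmap2 : Finset.Icc j k =
            (Finset.Icc (j - 1) (k - 1)).map ⟨fun i => i + 1, add_left_injective 1⟩ := by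
          ext i
          simp only [Finset.mem_Icc, Finset.mem_map, Function.Embedding.coeFn_mk]
          constructor
          · intro ⟨h1, h2⟩; exact ⟨i - 1, ⟨by omega, by omega⟩, by omega⟩
          · rintro ⟨i', ⟨h1, h2⟩, rfl⟩; omega
        rw [hins, Finset.sum_insert (by simp [Finset.mem_Icc]; omega)]
        have hzero : (k.choose (k + 1) : ℝ) * a ^ (k + 1) * b ^ (k - k) = 0 := by
          rw [Nat.choose_succ_self]
          simp
        rw [hzero, zero_add, Tb, hmap2, Finset.sum_map, Finset.mul_sum]
        simp only [Function.Embedding.coeFn_mk]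
        refine Finset.sum_congr rfl fun i hi => ?_
        rw [Finset.mem_Icc] at hi
        have : k - i = (k - (i + 1)) + 1 := by omega
        rw [this]
        ring
      · have hL : ∑ i ∈ Finset.Icc (j - 1) k,
            (k.choose (i + 1) : ℝ) * a ^ (i + 1) * b ^ (k - i) = 0 := by
          refine Finset.sum_eq_zero fun i hi => ?_
          rw [Finset.mem_Icc] at hi
          rw [Nat.choose_eq_zero_of_lt (by omega)]
          ring
        rw [hL, Tb, Finset.Icc_eq_empty (by omega), Finset.sum_empty, mul_zero]
    calc Tb (k+1) j a b
        = ∑ i ∈ Finset.Icc (j - 1) k,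
            ((k + 1).choose (i + 1) : ℝ) * a ^ (i + 1) * b ^ (k + 1 - (i + 1)) := by
          rw [Tb, hmap, Finset.sum_map]
          simp only [Function.Embedding.coeFn_mk]
      _ = ∑ i ∈ Finset.Icc (j - 1) k, (a * ((k.choose i : ℝ) * a ^ i * b ^ (k - i)) +
            (k.choose (i + 1) : ℝ) * a ^ (i + 1) * b ^ (k - i)) :=
          Finset.sum_congr rfl hsplit
      _ = a * Tb k (j - 1) a b + b * Tb k j a b := by
          rw [Finset.sum_add_distrib, ← Finset.mul_sum, hsecond]
          simp only [Tb]
  · rw [Tb_empty hjk, Tb_empty (by omega : k < j - 1), Tb_empty (by omega : k < j)]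
    ring
private lemma Nb_pascal {k j r s : ℕ} (hj : 1 ≤ j) :
    Nb (k + 1) j r s = r * Nb k (j - 1) r s + s * Nb k j r s := by
  have := Tb_pascal (k := k) hj (r : ℝ) (s : ℝ)
  have hT : ∀ m i, Tb m i (r : ℝ) (s : ℝ) = (Nb m i r s : ℝ) := by
    intro m i
    rw [Tb, Nb, Nat.cast_sum]
    refine Finset.sum_congr rfl fun p _ => by push_cast; ring
  rw [hT, hT, hT] at this
  exact_mod_cast this

private lemma Nb_zero (k r s : ℕ) : Nb k 0 r s = (r + s) ^ k := by
  have := Tb_zero k (r : ℝ) (s : ℝ)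
  have hT : Tb k 0 (r : ℝ) (s : ℝ) = (Nb k 0 r s : ℝ) := by
    rw [Tb, Nb, Nat.cast_sum]
    refine Finset.sum_congr rfl fun p _ => by push_cast; ring
  rw [hT] at this
  exact_mod_cast this

private lemma Nb_anti (k : ℕ) {j j' : ℕ} (h : j ≤ j') (r s : ℕ) :
    Nb k j' r s ≤ Nb k j r s := by
  refine Finset.sum_le_sum_of_subset ?_
  intro i hi
  rw [Finset.mem_Icc] at hi ⊢
  omega

private lemma Nb_le (k j r s : ℕ) : Nb k j r s ≤ (r + s) ^ k := by
  rw [← Nb_zero]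
  exact Nb_anti k (Nat.zero_le j) r s

private lemma Nb_pos {k j r s : ℕ} (hj : j ≤ k) (hr : 1 ≤ r) (hs : 1 ≤ s) :
    1 ≤ Nb k j r s := by
  have hmem : j ∈ Finset.Icc j k := Finset.mem_Icc.2 ⟨le_refl j, hj⟩
  calc 1 ≤ k.choose j * r ^ j * s ^ (k - j) := by
        have h1 : 1 ≤ k.choose j := Nat.choose_pos hj
        have h2 : 1 ≤ r ^ j := Nat.one_le_pow _ _ hr
        have h3 : 1 ≤ s ^ (k - j) := Nat.one_le_pow _ _ hs
        calc 1 = 1 * 1 * 1 := by ring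
          _ ≤ _ := by exact Nat.mul_le_mul (Nat.mul_le_mul h1 h2) h3
    _ ≤ Nb k j r s := Finset.single_le_sum
        (f := fun i => k.choose i * r ^ i * s ^ (k - i)) (fun i _ => Nat.zero_le _) hmem

private lemma Tb_one (k j : ℕ) (hj : j ≤ k) : Tb k j 1 0 = 1 := by
  rw [Tb]
  rw [Finset.sum_eq_single k]
  · simp
  · intro i hi hne
    rw [Finset.mem_Icc] at hi
    have : 0 < k - i := by omega
    rw [zero_pow (by omega)]
    ring
  · intro h
    exact absurd (Finset.mem_Icc.2 ⟨hj, le_refl k⟩) h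

private lemma Tb_lt_one {k j : ℕ} (hj1 : 1 ≤ j) (hjk : j ≤ k) {a : ℝ} (ha0 : 0 ≤ a)
    (ha1 : a < 1) : Tb k j a (1 - a) < 1 := by
  have hb0 : 0 ≤ 1 - a := by linarith
  have h1 : Tb k j a (1 - a) ≤ Tb k 1 a (1 - a) := Tb_anti k hj1 ha0 hb0
  have hsplit : Tb k 0 a (1 - a) = (k.choose 0 : ℝ) * a ^ 0 * (1 - a) ^ k + Tb k 1 a (1 - a) := by
    rw [Tb, Tb]
    have : Finset.Icc 0 k = insert 0 (Finset.Icc 1 k) := by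
      ext i; simp [Finset.mem_Icc]; omega
    rw [this, Finset.sum_insert (by simp)]
    norm_num
  have h0 : Tb k 0 a (1 - a) = 1 := by rw [Tb_zero]; norm_num
  have hpos : 0 < (1 - a) ^ k := pow_pos (by linarith) k
  rw [h0] at hsplit
  simp only [Nat.choose_zero_right, Nat.cast_one, pow_zero, one_mul] at hsplit
  linarith

private lemma Tb_mono {k j : ℕ} {a a' : ℝ} (ha0 : 0 ≤ a) (haa : a ≤ a') (ha1 : a' ≤ 1) :
    Tb k j a (1 - a) ≤ Tb k j a' (1 - a') := by
  induction k generalizing j with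
  | zero =>
    rcases Nat.eq_zero_or_pos j with rfl | hj
    · rw [Tb_zero, Tb_zero]; norm_num
    · rw [Tb_empty hj, Tb_empty hj]
  | succ k ih =>
    rcases Nat.eq_zero_or_pos j with rfl | hj
    · rw [Tb_zero, Tb_zero]; norm_num
    · rw [Tb_pascal hj, Tb_pascal hj]
      have hP := ih (j := j - 1)
      have hQ := ih (j := j)
      have hPQ : Tb k j a' (1 - a') ≤ Tb k (j - 1) a' (1 - a') :=
        Tb_anti k (by omega) (by linarith) (by linarith)
      have hQ0 : 0 ≤ Tb k j a' (1 - a') := Tb_nonneg _ _ (by linarith) (by linarith)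
      nlinarith [hP, hQ]

private lemma Tb_strict_mono {k j : ℕ} (hj1 : 1 ≤ j) (hjk : j ≤ k) {a a' : ℝ} (ha0 : 0 < a)
    (haa : a < a') (ha1 : a' ≤ 1) : Tb k j a (1 - a) < Tb k j a' (1 - a') := by
  rcases eq_or_lt_of_le ha1 with rfl | ha1'
  · -- a' = 1
    rw [show (1 : ℝ) - 1 = 0 by ring, Tb_one k j hjk]
    exact Tb_lt_one hj1 hjk (le_of_lt ha0) haa
  · -- a' < 1
    obtain ⟨k', rfl⟩ : ∃ k', k = k' + 1 := ⟨k - 1, by omega⟩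
    rw [Tb_pascal hj1, Tb_pascal hj1]
    have h1 : Tb k' (j - 1) a (1 - a) ≤ Tb k' (j - 1) a' (1 - a') :=
      Tb_mono (le_of_lt ha0) (le_of_lt haa) (le_of_lt ha1')
    have h2 : Tb k' j a (1 - a) ≤ Tb k' j a' (1 - a') :=
      Tb_mono (le_of_lt ha0) (le_of_lt haa) (le_of_lt ha1')
    have hgap : Tb k' (j - 1) a' (1 - a') - Tb k' j a' (1 - a') =
        (k'.choose (j - 1) : ℝ) * a' ^ (j - 1) * (1 - a') ^ (k' - (j - 1)) := by
      rw [Tb, Tb]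
      have : Finset.Icc (j - 1) k' = insert (j - 1) (Finset.Icc j k') := by
        ext i; simp [Finset.mem_Icc]; omega
      rw [this, Finset.sum_insert (by simp [Finset.mem_Icc]; omega)]
      ring
    have hgappos : 0 < Tb k' (j - 1) a' (1 - a') - Tb k' j a' (1 - a') := by
      rw [hgap]
      have c1 : 0 < (k'.choose (j - 1) : ℝ) := by
        have : 0 < k'.choose (j - 1) := Nat.choose_pos (by omega)
        exact_mod_cast this
      have c2 : 0 < a' ^ (j - 1) := pow_pos (by linarith) _
      have c3 : 0 < (1 - a') ^ (k' - (j - 1)) := pow_pos (by linarith) _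
      positivity
    have hQ0 : 0 ≤ Tb k' j a (1 - a) := Tb_nonneg _ _ (by linarith) (by linarith)
    nlinarith [h1, h2]

private lemma Tb_cont (k j : ℕ) : Continuous (fun a : ℝ => Tb k j a (1 - a)) := by
  unfold Tb
  refine continuous_finset_sum _ fun i _ => ?_
  fun_prop
-- Stage 5: flat vectors
private def flatv (n r : ℕ) (α β : ℝ) : Fin n → ℝ := fun i => if (i : ℕ) < r then α else β

private lemma flatv_nonneg {n r : ℕ} {α β : ℝ} (hα : 0 ≤ α) (hβ : 0 ≤ β) :
    ∀ i, 0 ≤ flatv n r α β i := by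
  intro i
  unfold flatv
  split <;> assumption

private lemma flatv_antitone {n r : ℕ} {α β : ℝ} (h : β ≤ α) : Antitone (flatv n r α β) := by
  intro i j hij
  unfold flatv
  rcases lt_or_ge (j : ℕ) r with hj | hj
  · have : (i : ℕ) < r := by have := Fin.le_def.1 hij; omega
    simp [hj, this]
  · rcases lt_or_ge (i : ℕ) r with hi | hi
    · simp [not_lt.2 hj, hi, h]
    · simp [not_lt.2 hj, not_lt.2 hi]

private lemma flatv_pref_sum {n r : ℕ} (α β : ℝ) {l : ℕ} (hl : l ≤ n) :
    ∑ i ∈ pref l hl, flatv n r α β i = (min l r : ℕ) * α + ((l : ℝ) - (min l r : ℕ)) * β := by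
  classical
  have hminl : min l r ≤ l := min_le_left _ _
  rw [pref_sum_split (flatv n r α β) hminl hl]
  have h1 : ∑ i ∈ pref (min l r) (le_trans hminl hl), flatv n r α β i = (min l r : ℕ) * α := by
    rw [Finset.sum_congr rfl (fun i hi => ?_), Finset.sum_const, card_pref, nsmul_eq_mul]
    rw [mem_pref] at hi
    unfold flatv
    have : (i : ℕ) < r := by omega
    simp [this]
  have h2 : ∑ i ∈ ico (min l r) l hl, flatv n r α β i = ((l : ℝ) - (min l r : ℕ)) * β := by
    rw [Finset.sum_congr rfl (fun i hi => ?_), Finset.sum_const, card_ico hminl, nsmul_eq_mul]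
    · congr 1
      rw [Nat.cast_sub hminl]
    · rw [mem_ico] at hi
      unfold flatv
      have : ¬ ((i : ℕ) < r) := by omega
      simp [this]
  rw [h1, h2]

private lemma pref_univ {n : ℕ} : pref n (le_refl n) = (Finset.univ : Finset (Fin n)) := by
  ext i; simp [mem_pref, i.isLt]

private lemma flatv_total {n r : ℕ} (hr : r ≤ n) (α β : ℝ) :
    ∑ i, flatv n r α β i = r * α + ((n : ℝ) - r) * β := by
  have := flatv_pref_sum (n := n) (r := r) α β (le_refl n)
  rw [pref_univ] at this
  rw [this, min_eq_right hr]

private lemma flatv_eSum {n r : ℕ} {α β : ℝ} (hβ : 0 ≤ β) (hβα : β ≤ α) {l : ℕ} (hl : l ≤ n) :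
    eSum (flatv n r α β) l = (min l r : ℕ) * α + ((l : ℝ) - (min l r : ℕ)) * β := by
  rw [eSum_prefix _ (flatv_nonneg (le_trans hβ hβα) hβ) (flatv_antitone hβα) hl,
    flatv_pref_sum]

/-- Pascal-type convolution identity for binomial coefficient sums. -/
private lemma cf_pascal_sum (m r s : ℕ) (G : ℕ → ℝ) :
    ∑ j ∈ Finset.range (m + 2), (((m+1).choose j * r ^ j * s ^ (m + 1 - j) : ℕ) : ℝ) * G j
      = r * ∑ j ∈ Finset.range (m + 1), ((m.choose j * r ^ j * s ^ (m - j) : ℕ) : ℝ) * G (j+1)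
      + s * ∑ j ∈ Finset.range (m + 1), ((m.choose j * r ^ j * s ^ (m - j) : ℕ) : ℝ) * G j := by
  rw [Finset.sum_range_succ' _ (m + 1)]
  have e1 : ∀ j ∈ Finset.range (m + 1),
      (((m+1).choose (j+1) * r ^ (j+1) * s ^ (m + 1 - (j+1)) : ℕ) : ℝ) * G (j+1)
        = (r : ℝ) * (((m.choose j * r ^ j * s ^ (m - j) : ℕ) : ℝ) * G (j+1))
          + ((m.choose (j+1) * r ^ (j+1) * s ^ (m - j) : ℕ) : ℝ) * G (j+1) := by
    intro j hj
    rw [Finset.mem_range] at hj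
    have h1 : m + 1 - (j + 1) = m - j := by omega
    rw [h1, Nat.choose_succ_succ]
    push_cast
    ring
  rw [Finset.sum_congr rfl e1, Finset.sum_add_distrib, ← Finset.mul_sum]
  have e2 : ∑ j ∈ Finset.range (m + 1),
      ((m.choose (j+1) * r ^ (j+1) * s ^ (m - j) : ℕ) : ℝ) * G (j+1)
      + (((m+1).choose 0 * r ^ 0 * s ^ (m + 1 - 0) : ℕ) : ℝ) * G 0
      = s * ∑ j ∈ Finset.range (m + 1), ((m.choose j * r ^ j * s ^ (m - j) : ℕ) : ℝ) * G j := by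
    have e3 : (s : ℝ) * ∑ j ∈ Finset.range (m + 1),
        ((m.choose j * r ^ j * s ^ (m - j) : ℕ) : ℝ) * G j
        = ∑ j ∈ Finset.range (m + 1),
            ((m.choose j * r ^ j * s ^ (m + 1 - j) : ℕ) : ℝ) * G j := by
      rw [Finset.mul_sum]
      refine Finset.sum_congr rfl fun j hj => ?_
      rw [Finset.mem_range] at hj
      have : m + 1 - j = (m - j) + 1 := by omega
      rw [this]
      push_cast
      ring
    rw [e3, Finset.sum_range_succ' (fun j => ((m.choose j * r ^ j * s ^ (m + 1 - j) : ℕ) : ℝ) * G j) m]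
    have e4 : ∑ j ∈ Finset.range m,
        ((m.choose (j+1) * r ^ (j+1) * s ^ (m + 1 - (j+1)) : ℕ) : ℝ) * G (j+1)
        = ∑ j ∈ Finset.range m,
            ((m.choose (j+1) * r ^ (j+1) * s ^ (m - j) : ℕ) : ℝ) * G (j+1) := by
      refine Finset.sum_congr rfl fun j hj => ?_
      have : m + 1 - (j + 1) = m - j := by omega
      rw [this]
    rw [e4]
    have e5 : ∑ j ∈ Finset.range (m+1),
        ((m.choose (j+1) * r ^ (j+1) * s ^ (m - j) : ℕ) : ℝ) * G (j+1)
        = ∑ j ∈ Finset.range m,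
            ((m.choose (j+1) * r ^ (j+1) * s ^ (m - j) : ℕ) : ℝ) * G (j+1) := by
      rw [Finset.sum_range_succ]
      rw [Nat.choose_succ_self]
      simp
    rw [e5]
    simp
  linarith [e2]

/-- the multiset structure of tensor powers of a flat vector -/
private lemma flat_tpow_sum {n r : ℕ} (hr : r ≤ n) (α β : ℝ) (F : ℝ → ℝ) (m : ℕ) :
    ∑ i, F (tpow (flatv n r α β) m i)
      = ∑ j ∈ Finset.range (m + 1),
          ((m.choose j * r ^ j * (n - r) ^ (m - j) : ℕ) : ℝ) * F (α ^ j * β ^ (m - j)) := by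
  induction m generalizing F with
  | zero =>
    rw [Finset.sum_congr rfl fun i _ => congrArg F (tpow_zero_eq (flatv n r α β) i), Finset.sum_const, Finset.card_univ, Fintype.card_fin, pow_zero]
    simp
  | succ m ih =>
    set v := flatv n r α β with hv
    have e1 : ∑ i, F (tpow v (m+1) i) = ∑ p : Fin n, ∑ q : Fin (n ^ m), F (v p * tpow v m q) := by
      rw [Fintype.sum_equiv (Em n m) _ (fun z => F (v z.1 * tpow v m z.2))
        (fun i => by rw [tpow_succ_eq])]
      rw [Fintype.sum_prod_type]
    rw [e1]
    classical
    have hsplit : (Finset.univ : Finset (Fin n)) = pref r hr ∪ (pref r hr)ᶜ := by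
      simp
    rw [show (Finset.univ : Finset (Fin n)) = pref r hr ∪ (pref r hr)ᶜ from hsplit,
      Finset.sum_union disjoint_compl_right]
    have hA : ∀ p ∈ pref r hr, ∑ q : Fin (n ^ m), F (v p * tpow v m q)
        = ∑ j ∈ Finset.range (m + 1),
            ((m.choose j * r ^ j * (n - r) ^ (m - j) : ℕ) : ℝ) * F (α ^ (j+1) * β ^ (m - j)) := by
      intro p hp
      rw [mem_pref] at hp
      have hvp : v p = α := by rw [hv]; simp [flatv, hp]
      rw [hvp, ih (fun z => F (α * z))]
      refine Finset.sum_congr rfl fun j hj => ?_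
      congr 1
      rw [pow_succ]
      ring
    have hB : ∀ p ∈ (pref r hr)ᶜ, ∑ q : Fin (n ^ m), F (v p * tpow v m q)
        = ∑ j ∈ Finset.range (m + 1),
            ((m.choose j * r ^ j * (n - r) ^ (m - j) : ℕ) : ℝ) * F (α ^ j * β ^ (m + 1 - j)) := by
      intro p hp
      rw [Finset.mem_compl, mem_pref] at hp
      have hvp : v p = β := by rw [hv]; simp [flatv, hp]
      rw [hvp, ih (fun z => F (β * z))]
      refine Finset.sum_congr rfl fun j hj => ?_
      rw [Finset.mem_range] at hj
      congr 1
      have : m + 1 - j = (m - j) + 1 := by omega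
      rw [this, pow_succ]
      ring
    rw [Finset.sum_congr rfl hA, Finset.sum_congr rfl hB, Finset.sum_const, Finset.sum_const,
      card_pref, Finset.card_compl, card_pref, nsmul_eq_mul, nsmul_eq_mul]
    rw [cf_pascal_sum m r (n - r) (fun j => F (α ^ j * β ^ (m + 1 - j)))]
    have : ∀ j ∈ Finset.range (m+1), F (α ^ (j+1) * β ^ (m - j)) = F (α ^ (j+1) * β ^ (m + 1 - (j+1))) := by
      intro j hj
      have : m + 1 - (j + 1) = m - j := by omega
      rw [this]
    rw [Finset.sum_congr rfl (fun j hj => by rw [this j hj])]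
    simp
-- Stage 5b
private lemma cf_bridge (m j r s : ℕ) (α β : ℝ) :
    ((m.choose j * r ^ j * s ^ (m - j) : ℕ) : ℝ) * (α ^ j * β ^ (m - j))
      = (m.choose j : ℝ) * ((r : ℝ) * α) ^ j * ((s : ℝ) * β) ^ (m - j) := by
  push_cast
  rw [mul_pow, mul_pow]
  ring

private lemma w_mono {α β : ℝ} (hβ : 0 ≤ β) (hβα : β ≤ α) {m j j' : ℕ} (hj : j ≤ j')
    (hj' : j' ≤ m) : α ^ j * β ^ (m - j) ≤ α ^ j' * β ^ (m - j') := by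
  have hα : 0 ≤ α := le_trans hβ hβα
  have e1 : α ^ j' = α ^ j * α ^ (j' - j) := by
    rw [← pow_add]; congr 1; omega
  have e2 : β ^ (m - j) = β ^ (j' - j) * β ^ (m - j') := by
    rw [← pow_add]; congr 1; omega
  rw [e1, e2]
  have h3 : β ^ (j' - j) ≤ α ^ (j' - j) := pow_le_pow_left₀ hβ hβα _
  have h4 : (0:ℝ) ≤ β ^ (m - j') := pow_nonneg hβ _
  have h5 : (0:ℝ) ≤ α ^ j := pow_nonneg hα _
  calc α ^ j * (β ^ (j' - j) * β ^ (m - j')) = (α ^ j * β ^ (j' - j)) * β ^ (m - j') := by ring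
    _ ≤ (α ^ j * α ^ (j' - j)) * β ^ (m - j') :=
        mul_le_mul_of_nonneg_right (mul_le_mul_of_nonneg_left h3 h5) h4
    _ = α ^ j * α ^ (j' - j) * β ^ (m - j') := rfl

/-- dual upper bound on eSum of tpow of a flat vector at corner values -/
private lemma flat_dual {n r : ℕ} (hrn : r ≤ n) {α β : ℝ} (hβ : 0 ≤ β)
    (hβα : β ≤ α) {m l J : ℕ} (hJ : J ≤ m) (hl : l ≤ n ^ m) :
    eSum (tpow (flatv n r α β) m) l ≤ (l : ℝ) * (α ^ J * β ^ (m - J))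
      + (Tb m (J + 1) ((r:ℝ) * α) (((n - r : ℕ):ℝ) * β)
          - ((Nb m (J + 1) r (n - r)) : ℝ) * (α ^ J * β ^ (m - J))) := by
  set w : ℝ := α ^ J * β ^ (m - J) with hw
  have hα : 0 ≤ α := le_trans hβ hβα
  have hw0 : 0 ≤ w := by positivity
  have hdual := eSum_dual (tpow (flatv n r α β) m) hl hw0
  have hPhi : Phi (tpow (flatv n r α β) m) w =
      Tb m (J + 1) ((r:ℝ) * α) (((n - r : ℕ):ℝ) * β)
        - ((Nb m (J + 1) r (n - r)) : ℝ) * w := by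
    have hF := flat_tpow_sum hrn α β (fun z => max (z - w) 0) m
    rw [Phi, hF]
    have hsub : Finset.Icc (J+1) m ⊆ Finset.range (m+1) := by
      intro j hj
      rw [Finset.mem_Icc] at hj
      rw [Finset.mem_range]
      omega
    rw [← Finset.sum_subset hsub (by
      intro j hjr hjI
      rw [Finset.mem_range] at hjr
      rw [Finset.mem_Icc] at hjI
      have hjJ : j ≤ J := by omega
      have : α ^ j * β ^ (m - j) - w ≤ 0 := by
        rw [hw, sub_nonpos]
        exact w_mono hβ hβα hjJ hJ
      rw [max_eq_right this, mul_zero])]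
    have hin : ∀ j ∈ Finset.Icc (J+1) m,
        ((m.choose j * r ^ j * (n - r) ^ (m - j) : ℕ) : ℝ) * max ((α ^ j * β ^ (m - j)) - w) 0
          = ((m.choose j * r ^ j * (n - r) ^ (m - j) : ℕ) : ℝ) * (α ^ j * β ^ (m - j))
            - ((m.choose j * r ^ j * (n - r) ^ (m - j) : ℕ) : ℝ) * w := by
      intro j hj
      rw [Finset.mem_Icc] at hj
      have : 0 ≤ α ^ j * β ^ (m - j) - w := by
        rw [hw, sub_nonneg]
        exact w_mono hβ hβα (by omega) hj.2
      rw [max_eq_left this]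
      ring
    rw [Finset.sum_congr rfl hin, Finset.sum_sub_distrib]
    congr 1
    · rw [Tb]
      exact Finset.sum_congr rfl fun j _ => cf_bridge m j r (n - r) α β
    · rw [← Finset.sum_mul, Nb, Nat.cast_sum]
  rw [hPhi] at hdual
  exact hdual

/-- lower bound at corners for flat vectors -/
private lemma flat_corner {n r : ℕ} (hr1 : 1 ≤ r) (hrn : r + 1 ≤ n) {α β : ℝ} (hβ : 0 ≤ β)
    (hβα : β ≤ α) (m : ℕ) :
    ∀ j, Tb m j ((r:ℝ) * α) (((n - r : ℕ):ℝ) * β)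
      ≤ eSum (tpow (flatv n r α β) m) (Nb m j r (n - r)) := by
  have hα : 0 ≤ α := le_trans hβ hβα
  have hrn' : r ≤ n := by omega
  have hvnn := flatv_nonneg (n := n) (r := r) hα hβ
  induction m with
  | zero =>
    intro j
    rcases Nat.eq_zero_or_pos j with rfl | hj
    · have h1 : Tb 0 0 ((r:ℝ) * α) (((n - r : ℕ):ℝ) * β) = 1 := by
        rw [Tb_zero]; norm_num
      have h2 : Nb 0 0 r (n - r) = 1 := by rw [Nb_zero]; norm_num
      rw [h1, h2]
      have h3 := le_eSum (tpow (flatv n r α β) 0) (tpow_nonneg _ hvnn 0) Finset.univ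
      have h4 : ∑ i ∈ Finset.univ, tpow (flatv n r α β) 0 i = 1 := by
        rw [show ∀ s : Finset (Fin (n ^ 0)), ∑ i ∈ s, tpow (flatv n r α β) 0 i
            = ∑ i ∈ s, (1:ℝ) from fun s => Finset.sum_congr rfl fun i _ => tpow_zero_eq _ i]
        rw [Finset.sum_const, Finset.card_univ, Fintype.card_fin, pow_zero]
        simp
      rw [h4] at h3
      rw [Finset.card_univ, Fintype.card_fin] at h3
      convert h3 using 2 <;> simp
    · rw [Tb_empty hj, Nb]
      rw [Finset.Icc_eq_empty (by omega), Finset.sum_empty]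
      rw [eSum_zero]
  | succ m ih =>
    intro j
    rcases Nat.eq_zero_or_pos j with rfl | hj
    · -- full sum
      have h1 : Tb (m+1) 0 ((r:ℝ) * α) (((n - r : ℕ):ℝ) * β)
          = (∑ i, flatv n r α β i) ^ (m+1) := by
        rw [Tb_zero, flatv_total hrn']
        congr 1
        rw [Nat.cast_sub hrn']
      have h2 : Nb (m+1) 0 r (n - r) = n ^ (m+1) := by
        rw [Nb_zero]
        congr 1
        omega
      rw [h1, h2, ← sum_tpow, eSum_full _ (tpow_nonneg _ hvnn (m+1))]
    · -- Pascal + split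
      have hsplit := split_lemma (flatv n r α β) hvnn (hr := hrn')
        (Nb_le m (j-1) r (n-r) |>.trans (by rw [show r + (n - r) = n by omega]))
        (Nb_le m j r (n-r) |>.trans (by rw [show r + (n - r) = n by omega]))
      have hprefsum : ∑ i ∈ pref r hrn', flatv n r α β i = (r : ℝ) * α := by
        rw [flatv_pref_sum, min_self]
        simp
      have hcompsum : ∑ i ∈ (pref r hrn')ᶜ, flatv n r α β i = ((n - r : ℕ) : ℝ) * β := by
        have htot := flatv_total hrn' α β
        have : ∑ i ∈ (pref r hrn')ᶜ, flatv n r α β i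
            = ∑ i, flatv n r α β i - ∑ i ∈ pref r hrn', flatv n r α β i := by
          rw [eq_sub_iff_add_eq, Finset.sum_compl_add_sum]
        rw [this, htot, hprefsum, Nat.cast_sub hrn']
        ring
      rw [hprefsum, hcompsum] at hsplit
      have hIH1 := ih (j - 1)
      have hIH2 := ih j
      have hcoef1 : (0:ℝ) ≤ (r : ℝ) * α := by positivity
      have hcoef2 : (0:ℝ) ≤ ((n - r : ℕ) : ℝ) * β := by positivity
      have hpascalT := Tb_pascal (k := m) hj ((r:ℝ) * α) (((n - r : ℕ):ℝ) * β)
      have hpascalN := Nb_pascal (k := m) (j := j) (r := r) (s := n - r) hj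
      rw [hpascalT, hpascalN]
      calc (r:ℝ) * α * Tb m (j-1) ((r:ℝ) * α) (((n - r : ℕ):ℝ) * β)
            + ((n - r : ℕ):ℝ) * β * Tb m j ((r:ℝ) * α) (((n - r : ℕ):ℝ) * β)
          ≤ (r:ℝ) * α * eSum (tpow (flatv n r α β) m) (Nb m (j-1) r (n-r))
            + ((n - r : ℕ):ℝ) * β * eSum (tpow (flatv n r α β) m) (Nb m j r (n-r)) := by
            have := mul_le_mul_of_nonneg_left hIH1 hcoef1
            have := mul_le_mul_of_nonneg_left hIH2 hcoef2
            linarith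
        _ ≤ eSum (tpow (flatv n r α β) (m+1)) (r * Nb m (j-1) r (n-r) + (n - r) * Nb m j r (n-r)) :=
            hsplit
-- Stage 5c
private lemma eSum_comp_perm {M : ℕ} (u : Fin M → ℝ) (σ : Equiv.Perm (Fin M)) (l : ℕ) :
    eSum (u ∘ σ) l = eSum u l := by
  unfold eSum
  congr 1
  ext t
  constructor
  · rintro ⟨s, hs, rfl⟩
    refine ⟨s.image σ, by rw [Finset.card_image_of_injective _ σ.injective, hs], ?_⟩
    rw [Finset.sum_image (fun a _ b _ h => σ.injective h)]
    simp
  · rintro ⟨s, hs, rfl⟩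
    refine ⟨s.image σ.symm, by rw [Finset.card_image_of_injective _ σ.symm.injective, hs], ?_⟩
    rw [Finset.sum_image (fun a _ b _ h => σ.symm.injective h)]
    refine Finset.sum_congr rfl fun i _ => ?_
    simp

/-- concavity of the e-curve -/
private lemma eSum_concave {M : ℕ} (u : Fin M → ℝ) (hu : ∀ i, 0 ≤ u i) {p l q : ℕ}
    (hpl : p ≤ l) (hlq : l ≤ q) (hq : q ≤ M) :
    ((q : ℝ) - l) * eSum u p + ((l : ℝ) - p) * eSum u q ≤ ((q : ℝ) - p) * eSum u l := by
  obtain ⟨σ, hσ⟩ := exists_antitone_perm u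
  set g := u ∘ σ with hg
  have hgnn : ∀ i, 0 ≤ g i := fun i => hu _
  have hgs : ∀ j (hj : j ≤ M), eSum u j = ∑ i ∈ pref j hj, g i := by
    intro j hj
    rw [← eSum_comp_perm u σ, eSum_prefix g hgnn hσ hj]
  rw [hgs p (by omega), hgs l (by omega), hgs q hq]
  have havg := avg_lemma g hσ hpl hlq hq
  have hsl : ∑ i ∈ pref l (le_trans hlq hq), g i
      = ∑ i ∈ pref p (by omega : p ≤ M), g i + ∑ i ∈ ico p l (le_trans hlq hq), g i :=
    pref_sum_split g hpl (le_trans hlq hq)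
  have hsq : ∑ i ∈ pref q hq, g i
      = ∑ i ∈ pref p (by omega : p ≤ M), g i + ∑ i ∈ ico p q hq, g i :=
    pref_sum_split g (by omega) hq
  have hc1 : (p : ℝ) ≤ l := by exact_mod_cast hpl
  have hc2 : (l : ℝ) ≤ q := by exact_mod_cast hlq
  rw [hsl, hsq]
  nlinarith [havg]

/-- the flat vector with top mass `a` at cut `r` is majorized by `x` -/
private lemma flat_maj {n r : ℕ} (x : Fin n → ℝ) (hxnn : ∀ i, 0 ≤ x i) (hxa : Antitone x)
    (hxs : ∑ i, x i = 1) (hr1 : 1 ≤ r) (hrn : r + 1 ≤ n) {a : ℝ}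
    (ha : a ≤ eSum x r) (han : (r : ℝ) / n ≤ a) :
    Maj (flatv n r (a / r) ((1 - a) / (n - r))) x := by
  have hrn' : r ≤ n := by omega
  have hr0 : (0:ℝ) < r := by exact_mod_cast hr1
  have hs0 : (0:ℝ) < ((n - r : ℕ) : ℝ) := by
    have : 1 ≤ n - r := by omega
    exact_mod_cast this
  have hn0 : (0:ℝ) < n := by
    have : 1 ≤ n := by omega
    exact_mod_cast this
  have ha0 : 0 ≤ a := le_trans (by positivity) han
  have ha1 : a ≤ 1 := by
    refine le_trans ha ?_
    have := eSum_le_total x hxnn hrn'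
    rw [hxs] at this
    exact this
  set α := a / r with hα
  set β := (1 - a) / (n - r) with hβdef
  have hrltn : (r:ℝ) < n := by exact_mod_cast (by omega : r < n)
  have hβ0 : 0 ≤ β := by
    rw [hβdef]
    exact div_nonneg (by linarith) (by linarith)
  have hβα : β ≤ α := by
    rw [hβdef, hα, div_le_div_iff₀ (by
      have : ((n:ℝ) - r) = ((n - r:ℕ):ℝ) := by rw [Nat.cast_sub hrn']
      linarith) hr0]
    have hna : (r : ℝ) ≤ n * a := by
      rw [div_le_iff₀ hn0] at han
      linarith
    nlinarith
  have hvnn := flatv_nonneg (n := n) (r := r) (le_trans hβ0 hβα) hβ0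
  have hvat := flatv_antitone (n := n) (r := r) hβα
  have htot : ∑ i, flatv n r α β i = 1 := by
    rw [flatv_total hrn', hα, hβdef]
    have h1 : (r:ℝ) ≠ 0 := ne_of_gt hr0
    have h2 : (n:ℝ) - r ≠ 0 := ne_of_gt (by linarith)
    field_simp
    ring
  constructor
  · rw [htot, hxs]
  · intro l hl1 hln
    rw [eSum_prefix _ hvnn hvat hln, flatv_pref_sum, eSum_prefix x hxnn hxa hln]
    -- compare with prefix sums of x
    have herx : eSum x r = ∑ i ∈ pref r hrn', x i := eSum_prefix x hxnn hxa hrn'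
    rcases le_or_gt l r with hlr | hlr
    · -- l ≤ r
      rw [min_eq_left hlr, sub_self, zero_mul, add_zero]
      have havg := avg_lemma x hxa (Nat.zero_le l) hlr hrn'
      have hico1 : ico 0 l (le_trans hlr hrn') = pref l hln := by
        ext i; simp [mem_ico, mem_pref]
      have hico2 : ico 0 r hrn' = pref r hrn' := by
        ext i; simp [mem_ico, mem_pref]
      rw [hico1, hico2] at havg
      push_cast at havg
      have hl0 : (0:ℝ) ≤ (l:ℝ) := by positivity
      have key : (r:ℝ) * ((l:ℝ) * α) ≤ (r:ℝ) * ∑ i ∈ pref l hln, x i := by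
        have h1 : (r:ℝ) * ((l:ℝ) * α) = (l:ℝ) * a := by
          rw [hα]; field_simp
        have h2 : (l:ℝ) * a ≤ (l:ℝ) * (∑ i ∈ pref r hrn', x i) := by
          have := mul_le_mul_of_nonneg_left ha hl0
          rwa [herx] at this
        rw [h1]
        linarith [havg, h2]
      exact le_of_mul_le_mul_left key hr0
    · -- l > r
      have hrl : r ≤ l := le_of_lt hlr
      rw [min_eq_right hrl]
      have havg := avg_lemma x hxa hrl hln (le_refl n)
      set E := ∑ i ∈ pref r hrn', x i with hE
      set Sl := ∑ i ∈ ico r l (le_trans hln (le_refl n)), x i with hSl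
      set Sn := ∑ i ∈ ico r n (le_refl n), x i with hSn
      have hEa : a ≤ E := by rw [← herx]; exact ha
      have hsplitn : E + Sn = 1 := by
        rw [hE, hSn, ← pref_sum_split x hrn' (le_refl n)]
        rw [pref_univ]
        exact hxs
      have hsplitl : ∑ i ∈ pref l hln, x i = E + Sl := pref_sum_split x hrl hln
      have hnr : ((n:ℝ) - r) = ((n - r : ℕ) : ℝ) := by rw [Nat.cast_sub hrn']
      have hnr0 : (0:ℝ) < (n:ℝ) - r := by rw [hnr]; exact hs0
      have hra : (r:ℝ) * α = a := by rw [hα]; field_simp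
      have hsb : ((n:ℝ) - r) * β = 1 - a := by rw [hβdef]; field_simp
      have hln' : (l : ℝ) ≤ n := by exact_mod_cast hln
      have hrl' : (r : ℝ) ≤ l := by exact_mod_cast hrl
      have key : ((n:ℝ) - r) * ((r:ℝ) * α + ((l:ℝ) - (r:ℝ)) * β)
          ≤ ((n:ℝ) - r) * (E + Sl) := by
        have h2 : ((n:ℝ) - r) * (((l:ℝ) - r) * β) = ((l:ℝ) - r) * (1 - a) := by
          rw [show ((n:ℝ) - r) * (((l:ℝ) - r) * β) = ((l:ℝ) - r) * (((n:ℝ) - r) * β) by ring,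
            hsb]
        have h3 : ((l:ℝ) - r) * Sn = ((l:ℝ) - r) * (1 - E) := by
          rw [show (1:ℝ) - E = Sn by linarith]
        have h4 : (0:ℝ) ≤ ((n:ℝ) - l) * (E - a) :=
          mul_nonneg (by linarith) (by linarith)
        have h5 : ((n:ℝ) - r) * Sl ≥ ((l:ℝ) - r) * (1 - E) := by
          rw [← h3]; exact havg
        have h6 : ((n:ℝ) - r) * ((r:ℝ) * α) = ((n:ℝ) - r) * a := by rw [hra]
        have hexp : ((n:ℝ) - r) * ((r:ℝ) * α + ((l:ℝ) - (r:ℝ)) * β)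
            = ((n:ℝ) - r) * ((r:ℝ) * α) + ((n:ℝ) - r) * (((l:ℝ) - r) * β) := by ring
        have hdiff : ((n:ℝ) - r) * E + ((l:ℝ) - r) * (1 - E)
            - (((n:ℝ) - r) * a + ((l:ℝ) - r) * (1 - a)) = ((n:ℝ) - l) * (E - a) := by ring
        have hrhs : ((n:ℝ) - r) * (E + Sl) = ((n:ℝ) - r) * E + ((n:ℝ) - r) * Sl := by ring
        linarith [h2, h4, h5, h6, hexp, hdiff, hrhs]
      have := le_of_mul_le_mul_left (by
        calc ((n:ℝ) - r) * ((r:ℝ) * α + ((l:ℝ) - (r:ℝ)) * β) ≤ ((n:ℝ) - r) * (E + Sl) := key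
          _ = ((n:ℝ) - r) * (∑ i ∈ pref l hln, x i) := by rw [hsplitl]) hnr0
      exact this
-- Stage 6: main step lemma
private lemma Nb_empty {m j r s : ℕ} (h : m < j) : Nb m j r s = 0 := by
  rw [Nb, Finset.Icc_eq_empty (by omega), Finset.sum_empty]

private lemma eSum_r_lower {n r : ℕ} (x : Fin n → ℝ) (hxnn : ∀ i, 0 ≤ x i) (hxa : Antitone x)
    (hxs : ∑ i, x i = 1) (hrn : r ≤ n) (hn0 : 0 < n) : (r : ℝ) / n ≤ eSum x r := by
  have havg := avg_lemma x hxa (Nat.zero_le r) hrn (le_refl n)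
  have hico1 : ico 0 r (le_trans hrn (le_refl n)) = pref r hrn := by
    ext i; simp [mem_ico, mem_pref]
  have hico2 : ico 0 n (le_refl n) = pref n (le_refl n) := by
    ext i; simp [mem_ico, mem_pref]
  rw [hico1, hico2, pref_univ, hxs] at havg
  rw [eSum_prefix x hxnn hxa hrn]
  have hn0R : (0:ℝ) < n := by exact_mod_cast hn0
  rw [div_le_iff₀ hn0R]
  push_cast at havg
  nlinarith [havg]

/-- y-side level-m corner lower bounds from `x ∈ M_m(y)` -/
private lemma level_bound {n m r : ℕ} (x y : Fin n → ℝ)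
    (hxnn : ∀ i, 0 ≤ x i) (hxa : Antitone x) (hxs : ∑ i, x i = 1)
    (hynn : ∀ i, 0 ≤ y i)
    (hxM : Maj (tpow x m) (tpow y m)) (hr1 : 1 ≤ r) (hrn : r + 1 ≤ n) :
    ∀ j, Tb m j (eSum x r) (1 - eSum x r) ≤ eSum (tpow y m) (Nb m j r (n - r)) := by
  intro j
  have hrn' : r ≤ n := by omega
  have hn0 : 0 < n := by omega
  rcases le_or_gt j m with hjm | hjm
  · -- main case
    set ax := eSum x r with hax
    have haxn : (r:ℝ)/n ≤ ax := eSum_r_lower x hxnn hxa hxs hrn' hn0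
    have hax1 : ax ≤ 1 := by
      rw [hax]
      have := eSum_le_total x hxnn hrn'
      rwa [hxs] at this
    have hmaj := flat_maj x hxnn hxa hxs hr1 hrn (le_refl ax) haxn
    set α := ax / (r:ℝ) with hα
    set β := (1 - ax) / ((n:ℝ) - r) with hβ
    have hr0 : (0:ℝ) < r := by exact_mod_cast hr1
    have hrltn : (r:ℝ) < n := by exact_mod_cast (by omega : r < n)
    have hax0 : 0 ≤ ax := le_trans (by positivity) haxn
    have hβ0 : 0 ≤ β := div_nonneg (by linarith) (by linarith)
    have hβα : β ≤ α := by
      rw [hβ, hα, div_le_div_iff₀ (by linarith) hr0]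
      have hna : (r : ℝ) ≤ n * ax := by
        rw [div_le_iff₀ (by linarith : (0:ℝ) < n)] at haxn
        linarith
      nlinarith
    have hra : (r:ℝ) * α = ax := by rw [hα]; field_simp
    have hsb : ((n - r : ℕ):ℝ) * β = 1 - ax := by
      rw [hβ, Nat.cast_sub hrn']
      rw [mul_comm, div_mul_cancel₀]
      linarith
    have hcorner := flat_corner hr1 hrn hβ0 hβα m j
    rw [hra, hsb] at hcorner
    have hNb1 : 1 ≤ Nb m j r (n - r) := Nb_pos hjm (by omega) (by omega)
    have hNb2 : Nb m j r (n - r) ≤ n ^ m := by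
      have := Nb_le m j r (n - r)
      rwa [show r + (n - r) = n by omega] at this
    have hflatnn := flatv_nonneg (n := n) (r := r) (le_trans hβ0 hβα) hβ0
    have hmtp := maj_tpow _ x hflatnn hxnn hmaj m
    calc Tb m j ax (1 - ax) ≤ eSum (tpow (flatv n r α β) m) (Nb m j r (n - r)) := hcorner
      _ ≤ eSum (tpow x m) (Nb m j r (n - r)) := hmtp.2 _ hNb1 hNb2
      _ ≤ eSum (tpow y m) (Nb m j r (n - r)) := hxM.2 _ hNb1 hNb2
  · rw [Tb_empty hjm, Nb_empty hjm, eSum_zero]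

private lemma step_main {n m : ℕ} (hm : 1 ≤ m) (y : Fin n → ℝ) (hy : y ∈ Vn n)
    (hypos : ∀ i, 0 < y i) (H : Mk (m + 1) y = Sset y) : Mk m y = Sset y := by
  obtain ⟨hynn, hysum, hyat⟩ := hy
  have hn0 : 0 < n := by
    by_contra h
    have hn : n = 0 := by omega
    subst hn
    simp at hysum
  apply Set.eq_of_subset_of_subset
  · -- the hard inclusion
    rintro x ⟨hxV, hxM⟩
    obtain ⟨hxnn, hxsum, hxat⟩ := hxV
    refine ⟨⟨hxnn, hxsum, hxat⟩, ⟨by rw [hxsum, hysum], ?_⟩⟩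
    intro r hr1 hrn
    rcases eq_or_lt_of_le hrn with rfl | hrlt
    · rw [eSum_full x hxnn, eSum_full y hynn, hxsum, hysum]
    have hrn2 : r + 1 ≤ n := hrlt
    have hrn' : r ≤ n := by omega
    by_contra hcon
    push_neg at hcon
    set ax := eSum x r with hax
    set ad := eSum y r with had
    -- basic bounds
    have hax1 : ax ≤ 1 := by
      rw [hax]
      have := eSum_le_total x hxnn hrn'
      rwa [hxsum] at this
    have hr0 : (0:ℝ) < r := by exact_mod_cast hr1
    have hn0R : (0:ℝ) < n := by exact_mod_cast hn0
    have hrltn : (r:ℝ) < n := by exact_mod_cast (by omega : r < n)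
    have hadn : (r:ℝ)/n ≤ ad := eSum_r_lower y hynn hyat hysum hrn' hn0
    have had0 : 0 < ad := lt_of_lt_of_le (by positivity) hadn
    have had1 : ad < 1 := by
      have hsplit := pref_sum_split y hrn' (le_refl n)
      rw [pref_univ] at hsplit
      have hpos : 0 < ∑ i ∈ ico r n (le_refl n), y i := by
        refine Finset.sum_pos (fun i _ => hypos i) ?_
        exact ⟨⟨r, by omega⟩, by rw [mem_ico]; simp; omega⟩
      have hsum1 : ∑ i, y i = 1 := hysum
      have heq : ad = ∑ i ∈ pref r hrn', y i := by
        rw [had, eSum_prefix y hynn hyat hrn']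
      rw [hsum1] at hsplit
      rw [heq]
      linarith
    -- strict corner inequalities at ad
    set B : ℕ → ℝ := fun J => ad * Tb m (J-1) ax (1-ax) + (1-ad) * Tb m J ax (1-ax) with hB
    have hstrict : ∀ J ∈ Finset.Icc 1 (m+1), Tb (m+1) J ad (1-ad) < B J := by
      intro J hJ
      rw [Finset.mem_Icc] at hJ
      obtain ⟨hJ1, hJm⟩ := hJ
      rw [Tb_pascal hJ1, hB]
      by_cases hJ2 : 2 ≤ J
      · have hstrict1 : Tb m (J-1) ad (1-ad) < Tb m (J-1) ax (1-ax) :=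
          Tb_strict_mono (by omega) (by omega) had0 hcon hax1
        have hmono2 : Tb m J ad (1-ad) ≤ Tb m J ax (1-ax) :=
          Tb_mono (le_of_lt had0) (le_of_lt hcon) hax1
        have h1ad : 0 ≤ 1 - ad := by linarith
        have e1 := mul_lt_mul_of_pos_left hstrict1 had0
        have e2 := mul_le_mul_of_nonneg_left hmono2 h1ad
        simp only []
        linarith
      · have hJe : J = 1 := by omega
        subst hJe
        have h0ad : Tb m 0 ad (1-ad) = 1 := by rw [Tb_zero]; norm_num
        have h0ax : Tb m 0 ax (1-ax) = 1 := by rw [Tb_zero]; norm_num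
        have hstrict2 : Tb m 1 ad (1-ad) < Tb m 1 ax (1-ax) :=
          Tb_strict_mono le_rfl hm had0 hcon hax1
        have h1ad : 0 < 1 - ad := by linarith
        have e2 := mul_lt_mul_of_pos_left hstrict2 h1ad
        simp only []
        rw [show (1:ℕ) - 1 = 0 from rfl, h0ad, h0ax]
        linarith
    -- choose Az via openness
    have hopen : IsOpen (⋂ J ∈ Finset.Icc 1 (m+1), {A : ℝ | Tb (m+1) J A (1-A) < B J}) := by
      refine isOpen_biInter_finset fun J _ => ?_
      exact isOpen_lt (Tb_cont (m+1) J) continuous_const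
    have hmem : ad ∈ ⋂ J ∈ Finset.Icc 1 (m+1), {A : ℝ | Tb (m+1) J A (1-A) < B J} := by
      rw [Set.mem_iInter₂]
      intro J hJ
      exact hstrict J hJ
    obtain ⟨ε, hε0, hball⟩ := Metric.isOpen_iff.1 hopen ad hmem
    set Az := min ax (ad + ε/2) with hAz
    have hAz1 : ad < Az := lt_min hcon (by linarith)
    have hAz2 : Az ≤ ax := min_le_left _ _
    have hAzmem : Az ∈ ⋂ J ∈ Finset.Icc 1 (m+1), {A : ℝ | Tb (m+1) J A (1-A) < B J} := by
      refine hball ?_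
      rw [Metric.mem_ball, Real.dist_eq, abs_lt]
      constructor
      · have : Az ≤ ad + ε/2 := min_le_right _ _
        linarith
      · have : Az ≤ ad + ε/2 := min_le_right _ _
        linarith
    have hTA : ∀ J ∈ Finset.Icc 1 (m+1), Tb (m+1) J Az (1-Az) < B J := by
      intro J hJ
      exact Set.mem_iInter₂.1 hAzmem J hJ
    -- flat vector data at Az
    have hAzn : (r:ℝ)/n ≤ Az := le_trans hadn (le_of_lt hAz1)
    have hAz0 : 0 < Az := lt_of_lt_of_le (by positivity) hAzn
    have hAzle1 : Az ≤ 1 := le_trans hAz2 hax1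
    set α := Az / (r:ℝ) with hα
    set β := (1 - Az) / ((n:ℝ) - r) with hβ
    have hβ0 : 0 ≤ β := div_nonneg (by linarith) (by linarith)
    have hβα : β ≤ α := by
      rw [hβ, hα, div_le_div_iff₀ (by linarith) hr0]
      have hna : (r : ℝ) ≤ n * Az := by
        rw [div_le_iff₀ hn0R] at hAzn
        linarith
      nlinarith
    have hα0 : 0 ≤ α := le_trans hβ0 hβα
    have hra : (r:ℝ) * α = Az := by rw [hα]; field_simp
    have hsb : ((n - r : ℕ):ℝ) * β = 1 - Az := by
      rw [hβ, Nat.cast_sub hrn']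
      rw [mul_comm, div_mul_cancel₀]
      linarith
    set v := flatv n r α β with hv
    have hvnn : ∀ i, 0 ≤ v i := flatv_nonneg hα0 hβ0
    have hvat : Antitone v := flatv_antitone hβα
    have hvtot : ∑ i, v i = 1 := by
      rw [hv, flatv_total hrn', hα, hβ]
      have h1 : (r:ℝ) ≠ 0 := ne_of_gt hr0
      have h2 : (n:ℝ) - r ≠ 0 := ne_of_gt (by linarith)
      field_simp
      ring
    -- level-m bounds
    have hlev := level_bound x y hxnn hxat hxsum hynn hxM hr1 hrn2
    rw [← hax] at hlev
    -- corner bounds at level m+1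
    have hadpref : ∑ i ∈ pref r hrn', y i = ad := by
      rw [had, eSum_prefix y hynn hyat hrn']
    have hcorner : ∀ J', J' ≤ m + 2 →
        Tb (m+1) J' Az (1-Az) ≤ eSum (tpow y (m+1)) (Nb (m+1) J' r (n - r)) := by
      intro J' hJ'
      rcases Nat.eq_zero_or_pos J' with rfl | hJ'1
      · have h1 : Tb (m+1) 0 Az (1-Az) = 1 := by rw [Tb_zero]; norm_num
        have h2 : Nb (m+1) 0 r (n - r) = n ^ (m+1) := by
          rw [Nb_zero]; congr 1; omega
        rw [h1, h2, eSum_full _ (tpow_nonneg y hynn (m+1)), sum_tpow, hysum, one_pow]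
      rcases le_or_gt J' (m+1) with hJ'2 | hJ'2
      · -- 1 ≤ J' ≤ m+1
        have hBle : B J' ≤ eSum (tpow y (m+1)) (Nb (m+1) J' r (n - r)) := by
          have hlev1 := hlev (J' - 1)
          have hlev2 := hlev J'
          have hsplit := split_lemma y hynn (hr := hrn')
            ((Nb_le m (J'-1) r (n-r)).trans (by rw [show r + (n - r) = n by omega]))
            ((Nb_le m J' r (n-r)).trans (by rw [show r + (n - r) = n by omega]))
          have hcomp : ∑ i ∈ (pref r hrn')ᶜ, y i = 1 - ad := by
            have : ∑ i ∈ (pref r hrn')ᶜ, y i = ∑ i, y i - ∑ i ∈ pref r hrn', y i := by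
              rw [eq_sub_iff_add_eq, Finset.sum_compl_add_sum]
            rw [this, hysum, hadpref]
          rw [hadpref, hcomp] at hsplit
          have hpas := Nb_pascal (k := m) (j := J') (r := r) (s := n - r) hJ'1
          rw [← hpas] at hsplit
          have c1 : ad * Tb m (J'-1) ax (1-ax) ≤ ad * eSum (tpow y m) (Nb m (J'-1) r (n-r)) :=
            mul_le_mul_of_nonneg_left hlev1 (le_of_lt had0)
          have c2 : (1-ad) * Tb m J' ax (1-ax) ≤ (1-ad) * eSum (tpow y m) (Nb m J' r (n-r)) :=
            mul_le_mul_of_nonneg_left hlev2 (by linarith)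
          rw [hB]
          simp only []
          linarith
        exact le_trans (le_of_lt (hTA J' (Finset.mem_Icc.2 ⟨hJ'1, hJ'2⟩))) hBle
      · -- J' = m+2
        rw [Tb_empty (by omega), Nb_empty (by omega), eSum_zero]
    -- v ∈ Mk (m+1) y
    have hvM : v ∈ Mk (m + 1) y := by
      refine ⟨⟨hvnn, hvtot, hvat⟩, ⟨?_, ?_⟩⟩
      · rw [sum_tpow, sum_tpow, hvtot, hysum]
      intro l hl1 hl2
      -- choose J
      classical
      set P : ℕ → Prop := fun J => l ≤ Nb (m+1) J r (n - r) with hP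
      have hP0 : P 0 := by
        rw [hP]
        simp only []
        rw [Nb_zero, show r + (n - r) = n by omega]
        exact hl2
      set J := Nat.findGreatest P (m+1) with hJ
      have hJle : J ≤ m + 1 := Nat.findGreatest_le _
      have hJspec : l ≤ Nb (m+1) J r (n - r) := Nat.findGreatest_spec (Nat.zero_le _) hP0
      have hJup : Nb (m+1) (J+1) r (n - r) < l := by
        rcases eq_or_lt_of_le hJle with hJe | hJlt
        · rw [Nb_empty (by omega)]
          omega
        · have := Nat.findGreatest_is_greatest (by omega : Nat.findGreatest P (m+1) < J + 1)
            (by omega : J + 1 ≤ m + 1)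
          rw [hP] at this
          simp only [] at this
          omega
      set p := Nb (m+1) (J+1) r (n - r) with hp
      set q := Nb (m+1) J r (n - r) with hq
      set w := α ^ J * β ^ (m + 1 - J) with hw
      have hqn : q ≤ n ^ (m+1) := by
        rw [hq]
        have := Nb_le (m+1) J r (n - r)
        rwa [show r + (n - r) = n by omega] at this
      have hpq : p < q := by omega
      -- v-side dual bound
      have hdual := flat_dual hrn' hβ0 hβα hJle hl2
      rw [hra, hsb, ← hp] at hdual
      -- y-side concavity and corners
      have hconc := eSum_concave (tpow y (m+1)) (tpow_nonneg y hynn (m+1))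
        (by omega : p ≤ l) (by omega : l ≤ q) hqn
      have hcp := hcorner (J+1) (by omega)
      have hcq := hcorner J (by omega)
      rw [← hp] at hcp
      rw [← hq] at hcq
      -- splitting identities
      have hNsplit : q = (m+1).choose J * r ^ J * (n - r) ^ (m + 1 - J) + p := by
        rw [hq, hp, Nb, Nb]
        rw [show Finset.Icc J (m+1) = insert J (Finset.Icc (J+1) (m+1)) by
          ext i; simp [Finset.mem_Icc]; omega]
        rw [Finset.sum_insert (by simp [Finset.mem_Icc])]
      have hTsplit : Tb (m+1) J Az (1-Az)
          = (((m+1).choose J * r ^ J * (n - r) ^ (m + 1 - J) : ℕ) : ℝ) * w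
            + Tb (m+1) (J+1) Az (1-Az) := by
        rw [Tb, Tb]
        rw [show Finset.Icc J (m+1) = insert J (Finset.Icc (J+1) (m+1)) by
          ext i; simp [Finset.mem_Icc]; omega]
        rw [Finset.sum_insert (by simp [Finset.mem_Icc])]
        congr 1
        rw [hw, cf_bridge, hra, hsb]
      set Cf : ℕ := (m+1).choose J * r ^ J * (n - r) ^ (m + 1 - J) with hCf
      -- final assembly
      have hpR : ((p:ℕ):ℝ) ≤ (l:ℝ) := by exact_mod_cast (by omega : p ≤ l)
      have hlR : (l:ℝ) ≤ (q:ℝ) := by exact_mod_cast (by omega : l ≤ q)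
      have hpqR : ((p:ℕ):ℝ) < (q:ℝ) := by exact_mod_cast hpq
      have hqpCf : ((q:ℝ) - p) = (Cf : ℝ) := by
        rw [hNsplit, hCf]
        push_cast
        ring
      set T1 := Tb (m+1) (J+1) Az (1-Az) with hT1
      set TJ := Tb (m+1) J Az (1-Az) with hTJ
      have key : ((q:ℝ) - p) * eSum (tpow v (m+1)) l ≤ ((q:ℝ) - p) * eSum (tpow y (m+1)) l := by
        have lhs1 : ((q:ℝ) - p) * eSum (tpow v (m+1)) l
            ≤ ((q:ℝ) - p) * ((l:ℝ) * w + (T1 - (p:ℝ) * w)) := by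
          apply mul_le_mul_of_nonneg_left _ (by linarith)
          exact hdual
        have lhs2 : ((q:ℝ) - p) * ((l:ℝ) * w + (T1 - (p:ℝ) * w))
            = ((q:ℝ) - l) * T1 + ((l:ℝ) - p) * TJ := by
          linear_combination (-((l:ℝ) - (p:ℝ))) * hTsplit + (((l:ℝ) - (p:ℝ)) * w) * hqpCf
        have rhs1 : ((q:ℝ) - l) * T1 + ((l:ℝ) - p) * TJ
            ≤ ((q:ℝ) - l) * eSum (tpow y (m+1)) p + ((l:ℝ) - p) * eSum (tpow y (m+1)) q := by
          have e1 := mul_le_mul_of_nonneg_left hcp (by linarith : (0:ℝ) ≤ (q:ℝ) - l)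
          have e2 := mul_le_mul_of_nonneg_left hcq (by linarith : (0:ℝ) ≤ (l:ℝ) - p)
          linarith
        linarith [hconc, lhs1, lhs2, rhs1]
      exact le_of_mul_le_mul_left (by linarith [key]) (by linarith : (0:ℝ) < (q:ℝ) - p)
    -- contradiction via H
    rw [H] at hvM
    obtain ⟨-, hvmaj⟩ := hvM
    have := hvmaj.2 r hr1 hrn'
    have hvr : eSum v r = Az := by
      rw [hv, flatv_eSum hβ0 hβα hrn', min_self, sub_self, zero_mul, add_zero, hra]
    rw [hvr, ← had] at this
    linarith
  · rintro x ⟨hxV, hxMaj⟩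
    exact ⟨hxV, maj_tpow x y hxV.1 hynn hxMaj m⟩

/-- Theorem 8 of the paper. `M_{k+1}(y) = S(y)` implies
`M_k(y) = S(y)`, and consequently `M_k(y) = S(y)` implies `M_l(y) = S(y)`
for all `1 ≤ l ≤ k`. -/
theorem stmt7 {n k : ℕ} (hk : 1 < k)
    (y : Fin n → ℝ) (hy : y ∈ Vn n) (hypos : ∀ i, 0 < y i) :
    (Mk (k + 1) y = Sset y → Mk k y = Sset y) ∧
    (∀ k' : ℕ, 1 ≤ k' → Mk k' y = Sset y →
      ∀ l : ℕ, 1 ≤ l → l ≤ k' → Mk l y = Sset y) := by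
  constructor
  · intro H
    exact step_main (by omega) y hy hypos H
  · intro k' hk' H l hl1 hlk
    have main : ∀ j : ℕ, j + l ≤ k' → Mk (k' - j) y = Sset y := by
      intro j
      induction j with
      | zero =>
        intro _
        simpa using H
      | succ j ih =>
        intro h
        have h1 : Mk (k' - j) y = Sset y := ih (by omega)
        have h2 : k' - (j + 1) + 1 = k' - j := by omega
        refine step_main (by omega : 1 ≤ k' - (j + 1)) y hy hypos ?_
        rw [h2]
        exact h1
    have := main (k' - l) (by omega)
    rwa [show k' - (k' - l) = l by omega] at this

end
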